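/- arXiv:math/0305034 — 4 statements merged into one kernel-verified Lean document; each statement's English description precedes it below -/
import Mathlib

section
/- Let A be a commutative ring, B an A-algebra, b ∈ B a regular element, a ∈ A, and R_2 = B[T]/(bT - a). Then the first Fitting ideal of the R_2-module Ω^1_{R_2/A} equals the ideal generated by (the images of) b and T. -/
open Polynomial

/-- The `k`-th Fitting ideal of an `R`-module `M`: for any surjection
`f : Rⁿ → M`, it is the ideal generated by the `(n-k) × (n-k)` minors of matrices
whose columns are relations (elements of the kernel of `f`); taking the supremum
over all such presentations makes this well defined. -/
def fittingIdeal (R : Type*) [CommRing R] (M : Type*) [AddCommGroup M] [Module R M]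
    (k : ℕ) : Ideal R :=
  ⨆ (n : ℕ) (f : (Fin n → R) →ₗ[R] M) (_ : Function.Surjective f),
    Ideal.span { r : R | ∃ (ρ : Fin (n - k) → Fin n) (c : Fin (n - k) → Fin n → R),
      (∀ j, f (c j) = 0) ∧ r = Matrix.det (Matrix.of fun i j => c j (ρ i)) }

universe u

set_option maxHeartbeats 1600000
set_option synthInstance.maxHeartbeats 400000
set_option linter.unreachableTactic false
set_option linter.unusedTactic false

section AuxDet

open Matrix

variable {S : Type*} [CommRing S]

/-- Padding: determinant of a product through a smaller index type vanishes. -/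
lemma det_mul_card_lt {ι : Type*} [Fintype ι] [DecidableEq ι] {m : ℕ}
    (h : Fintype.card ι < m) (A : Matrix (Fin m) ι S) (B : Matrix ι (Fin m) S) :
    (A * B).det = 0 := by
  obtain ⟨e⟩ : Nonempty (ι ↪ Fin m) := by
    rw [Function.Embedding.nonempty_iff_card_le, Fintype.card_fin]; omega
  classical
  set A' : Matrix (Fin m) (Fin m) S :=
    fun i j => if hj : ∃ k, e k = j then A i hj.choose else 0 with hA'
  set B' : Matrix (Fin m) (Fin m) S :=
    fun j l => if hj : ∃ k, e k = j then B hj.choose l else 0 with hB'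
  have key : A * B = A' * B' := by
    ext i l
    simp only [Matrix.mul_apply]
    rw [← Finset.sum_subset (Finset.subset_univ (Finset.univ.map e))]
    · rw [Finset.sum_map]
      apply Finset.sum_congr rfl
      intro k _
      have hj : ∃ k', e k' = e k := ⟨k, rfl⟩
      have : hj.choose = k := e.injective hj.choose_spec
      simp [hA', hB', dif_pos hj, this]
    · intro j _ hj
      have : ¬ ∃ k, e k = j := by
        rintro ⟨k, rfl⟩
        exact hj (Finset.mem_map_of_mem e (Finset.mem_univ k))
      simp [hA', dif_neg this]
  have hrow : ∃ j0 : Fin m, ∀ k, e k ≠ j0 := by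
    by_contra hc
    push_neg at hc
    have : Function.Surjective e := fun j => hc j
    have := Fintype.card_le_of_surjective e this
    simp at this; omega
  obtain ⟨j0, hj0⟩ := hrow
  have : B'.det = 0 := by
    apply Matrix.det_eq_zero_of_row_eq_zero j0
    intro l
    have : ¬ ∃ k, e k = j0 := by rintro ⟨k, hk⟩; exact hj0 k hk
    simp [hB', dif_neg this]
  rw [key, Matrix.det_mul, this, mul_zero]

/-- Over a local ring: relations among columns of a split-surjective `2 × n` matrix have
vanishing `(n-1)`-minors. -/
lemma det_rel_zero_of_isLocalRing [IsLocalRing S] {n m : ℕ} (hm : n ≤ m + 1)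
    (F : Matrix (Fin 2) (Fin n) S) (G : Matrix (Fin n) (Fin 2) S) (hFG : F * G = 1)
    (c : Fin m → Fin n → S) (hc : ∀ j, F.mulVec (c j) = 0) (ρ : Fin m → Fin n) :
    Matrix.det (Matrix.of fun i j => c j (ρ i)) = 0 := by
  -- first, n ≥ 2
  rcases lt_or_ge n 2 with hn | hn
  · exfalso
    interval_cases n
    · have := congrFun (congrFun hFG 0) 0
      simp [Matrix.mul_apply, Matrix.one_apply] at this
    · have h1 : (1 : S) = Matrix.det (F * G) := by rw [hFG, Matrix.det_one]
      rw [Matrix.det_fin_two] at h1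
      simp only [Matrix.mul_apply, Fin.sum_univ_one] at h1
      rw [show F 0 0 * G 0 0 * (F 1 0 * G 0 1) - F 0 0 * G 0 1 * (F 1 0 * G 0 0) = 0 by ring] at h1
      exact one_ne_zero h1
  -- the kernel of F as a module
  set P : Matrix (Fin n) (Fin n) S := 1 - G * F with hP
  set K : Submodule S (Fin n → S) := LinearMap.ker F.mulVecLin with hK
  have hPK : ∀ v : Fin n → S, P.mulVec v ∈ K := by
    intro v
    simp only [hK, LinearMap.mem_ker, Matrix.mulVecLin_apply, ← Matrix.mulVec_mulVec]
    have : F * P = 0 := by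
      rw [hP, Matrix.mul_sub, Matrix.mul_one, ← Matrix.mul_assoc, hFG, Matrix.one_mul, sub_self]
    rw [Matrix.mulVec_mulVec, this, Matrix.zero_mulVec]
  have hPid : ∀ v ∈ K, P.mulVec v = v := by
    intro v hv
    rw [hP, Matrix.sub_mulVec, Matrix.one_mulVec, ← Matrix.mulVec_mulVec,
      show F.mulVec v = 0 from hv, Matrix.mulVec_zero, sub_zero]
  -- K is a finite projective module, hence free
  let retr : (Fin n → S) →ₗ[S] K := (P.mulVecLin).codRestrict K (by simpa using hPK)
  have retr_apply : ∀ v, (retr v : Fin n → S) = P.mulVec v := fun v => rfl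
  have hretr : retr.comp K.subtype = LinearMap.id :=
    LinearMap.ext fun v => Subtype.ext (hPid v.1 v.2)
  have : Module.Projective S K := Module.Projective.of_split K.subtype retr hretr
  have : Module.Finite S K := Module.Finite.of_surjective retr (by
    intro k
    exact ⟨k.1, Subtype.ext (hPid k.1 k.2)⟩)
  have : Module.FinitePresentation S K := Module.finitePresentation_of_projective S K
  have : Module.Free S K := Module.free_of_flat_of_isLocalRing
  have hPG : P * G = 0 := by
    rw [hP, Matrix.sub_mul, Matrix.one_mul, Matrix.mul_assoc, hFG, Matrix.mul_one, sub_self]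
  -- the split gives (Fin n → S) ≃ K × (Fin 2 → S)
  let e : (Fin n → S) ≃ₗ[S] K × (Fin 2 → S) := by
    refine LinearEquiv.ofLinear (LinearMap.prod retr F.mulVecLin)
      (K.subtype.coprod G.mulVecLin) ?_ ?_
    · apply LinearMap.ext
      rintro ⟨k, w⟩
      have hGw : P.mulVec (G.mulVec w) = 0 := by
        rw [Matrix.mulVec_mulVec, hPG, Matrix.zero_mulVec]
      have h1 : P.mulVec (k.1 + G.mulVec w) = k.1 := by
        rw [Matrix.mulVec_add, hPid k.1 k.2, hGw, add_zero]
      have h2 : F.mulVec (k.1 + G.mulVec w) = w := by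
        have : F.mulVec (G.mulVec w) = w := by
          rw [Matrix.mulVec_mulVec, hFG, Matrix.one_mulVec]
        rw [Matrix.mulVec_add, show F.mulVec k.1 = 0 from k.2, this, zero_add]
      refine Prod.ext (Subtype.ext ?_) ?_
      · show P.mulVec (k.1 + G.mulVec w) = k.1
        exact h1
      · exact h2
    · apply LinearMap.ext
      intro v
      show (retr v : Fin n → S) + G.mulVec (F.mulVec v) = v
      rw [retr_apply, hP, Matrix.sub_mulVec, Matrix.one_mulVec, Matrix.mulVec_mulVec]
      abel
  -- counting
  have hcard : Fintype.card (Module.Free.ChooseBasisIndex S K) < m := by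
    have h1 : Module.finrank S (Fin n → S) = n := Module.finrank_fin_fun S
    have h2 : Module.finrank S (K × (Fin 2 → S)) = Module.finrank S K + 2 := by
      rw [Module.finrank_prod, Module.finrank_fin_fun]
    have h3 := e.finrank_eq
    rw [h1, h2] at h3
    rw [← Module.finrank_eq_card_chooseBasisIndex]
    omega
  -- write the minor matrix as a product through the basis of K
  let κ := Module.Free.chooseBasis S K
  set ι := Module.Free.ChooseBasisIndex S K
  let Amat : Matrix (Fin m) ι S := fun i k => (κ k : Fin n → S) (ρ i)
  let Bmat : Matrix ι (Fin m) S := fun k j => κ.repr ⟨c j, hc j⟩ k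
  have : (Matrix.of fun i j => c j (ρ i)) = Amat * Bmat := by
    ext i j
    have := κ.sum_repr ⟨c j, hc j⟩
    have h4 : ∀ x : K, (x : Fin n → S) (ρ i) = ((x : Fin n → S)) (ρ i) := fun _ => rfl
    calc c j (ρ i) = ((⟨c j, hc j⟩ : K) : Fin n → S) (ρ i) := rfl
      _ = ((∑ k, κ.repr ⟨c j, hc j⟩ k • κ k : K) : Fin n → S) (ρ i) := by rw [κ.sum_repr]
      _ = ∑ k, κ.repr ⟨c j, hc j⟩ k • (κ k : Fin n → S) (ρ i) := by
          rw [show ((∑ k, κ.repr ⟨c j, hc j⟩ k • κ k : K) : Fin n → S)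
              = ∑ k, κ.repr ⟨c j, hc j⟩ k • (κ k : Fin n → S) by
            push_cast [Submodule.coe_sum]
            rfl]
          simp [Finset.sum_apply]
      _ = (Amat * Bmat) i j := by
          rw [Matrix.mul_apply]
          apply Finset.sum_congr rfl
          intro k _
          simp [Amat, Bmat, smul_eq_mul, mul_comm]
  rw [this]
  exact det_mul_card_lt hcard Amat Bmat

/-- An element of a commutative ring vanishing in every localization at a maximal ideal is zero. -/
lemma eq_zero_of_localization_at_maximal {x : S}
    (h : ∀ (P : Ideal S) (_ : P.IsMaximal),
      algebraMap S (Localization.AtPrime P) x = 0) : x = 0 := by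
  by_contra hx
  have hann : LinearMap.ker (LinearMap.toSpanSingleton S S x) ≠ ⊤ := by
    intro hT
    have : (1 : S) ∈ LinearMap.ker (LinearMap.toSpanSingleton S S x) := hT ▸ trivial
    simp [LinearMap.mem_ker, LinearMap.toSpanSingleton_apply] at this
    exact hx this
  obtain ⟨P, hPmax, hP⟩ := Ideal.exists_le_maximal _ hann
  have := h P hPmax
  rw [IsLocalization.map_eq_zero_iff P.primeCompl] at this
  obtain ⟨m, hm⟩ := this
  have : (m : S) ∈ LinearMap.ker (LinearMap.toSpanSingleton S S x) := by
    simpa [LinearMap.mem_ker, LinearMap.toSpanSingleton_apply, smul_eq_mul] using hm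
  exact m.2 (hP this)

/-- Over any commutative ring: relations among columns of a split-surjective `2 × n` matrix
have vanishing `(n-1)`-minors. -/
lemma det_rel_zero {n m : ℕ} (hm : n ≤ m + 1)
    (F : Matrix (Fin 2) (Fin n) S) (G : Matrix (Fin n) (Fin 2) S) (hFG : F * G = 1)
    (c : Fin m → Fin n → S) (hc : ∀ j, F.mulVec (c j) = 0) (ρ : Fin m → Fin n) :
    Matrix.det (Matrix.of fun i j => c j (ρ i)) = 0 := by
  apply eq_zero_of_localization_at_maximal
  intro P hPmax
  set φ := algebraMap S (Localization.AtPrime P)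
  rw [RingHom.map_det]
  have hmap : ∀ j, (F.map φ).mulVec (fun t => φ (c j t)) = 0 := by
    intro j
    funext i
    have := congrFun (hc j) i
    simp only [Matrix.mulVec, dotProduct, Pi.zero_apply] at this ⊢
    rw [show ∑ t, F.map φ i t * φ (c j t) = φ (∑ t, F i t * c j t) by
      rw [map_sum]; exact Finset.sum_congr rfl fun t _ => (map_mul φ _ _).symm, this, map_zero]
  have := det_rel_zero_of_isLocalRing hm (F.map φ) (G.map φ)
    (by rw [← Matrix.map_mul, hFG, Matrix.map_one φ (map_zero φ) (map_one φ)])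
    (fun j t => φ (c j t)) hmap ρ
  rw [← this]
  congr 1


end AuxDet

namespace FitAux
variable (A B : Type u) [CommRing A] [CommRing B] [Algebra A B] (b : B) (a : A)
noncomputable abbrev Jq : Ideal B[X] := Ideal.span {C b * X - C (algebraMap A B a)}
abbrev Rg := B[X] ⧸ Jq A B b a
noncomputable abbrev mkJ : B[X] →+* Rg A B b a := Ideal.Quotient.mk (Jq A B b a)
noncomputable abbrev Ig : Ideal (Rg A B b a) :=
  Ideal.span {mkJ A B b a (C b), mkJ A B b a X}
abbrev Sg := Rg A B b a ⧸ Ig A B b a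
noncomputable abbrev instCommRingRg : CommRing (Rg A B b a) := Ideal.Quotient.commRing _
noncomputable abbrev instCommRingSg : CommRing (Sg A B b a) := Ideal.Quotient.commRing _
attribute [local instance] instCommRingRg instCommRingSg
noncomputable abbrev chi : B[X] →+* Sg A B b a :=
  (Ideal.Quotient.mk (Ig A B b a)).comp (mkJ A B b a)
noncomputable abbrev psi : B →+* Sg A B b a := (chi A B b a).comp C
variable (bas : Module.Basis (Fin 1) B (Ω[B⁄A]))
noncomputable def gd (β : B) : B := bas.repr (KaehlerDifferential.D A B β) 0

-- facts about chi and psi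
lemma psi_b : psi A B b a b = 0 := by
  apply Ideal.Quotient.eq_zero_iff_mem.mpr
  exact Ideal.subset_span (Set.mem_insert _ _)

lemma chi_X : chi A B b a X = 0 := by
  apply Ideal.Quotient.eq_zero_iff_mem.mpr
  exact Ideal.subset_span (Set.mem_insert_of_mem _ rfl)

lemma chi_eval_zero (p : B[X]) : chi A B b a p = psi A B b a (p.eval 0) := by
  have hdvd : X ∣ p - C (p.eval 0) := by
    rw [X_dvd_iff]
    simp [coeff_zero_eq_eval_zero]
  obtain ⟨u, hu⟩ := hdvd
  have : p = C (p.eval 0) + X * u := by rw [← hu]; ring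
  rw [this, map_add, map_mul, chi_X]
  simp [psi]

lemma chi_q : chi A B b a (C b * X - C (algebraMap A B a)) = 0 := by
  simp only [chi, RingHom.comp_apply]
  rw [show mkJ A B b a (C b * X - C (algebraMap A B a)) = 0 from
    Ideal.Quotient.eq_zero_iff_mem.mpr (Ideal.subset_span rfl)]
  simp

lemma psi_alg (x : A) : psi A B b a (algebraMap A B x) = algebraMap A (Sg A B b a) x := by
  simp only [psi, chi, RingHom.comp_apply]
  rw [← Polynomial.algebraMap_apply, Ideal.Quotient.mk_algebraMap, Ideal.Quotient.mk_algebraMap]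

/-- The candidate derivation on `B[X]`, valued in `(Fin 2 → Sg)`. -/
noncomputable def ell (p : B[X]) : Fin 2 → Sg A B b a :=
  ![psi A B b a (gd A B bas (p.eval 0)), chi A B b a (derivative p)]

lemma ell_zero_apply (p : B[X]) :
    ell A B b a bas p 0 = psi A B b a (gd A B bas (p.eval 0)) := rfl

lemma ell_one_apply (p : B[X]) :
    ell A B b a bas p 1 = chi A B b a (derivative p) := rfl

lemma fin2_cases (i : Fin 2) : i = 0 ∨ i = 1 := by omega

lemma ell_add (p p' : B[X]) :
    ell A B b a bas (p + p') = ell A B b a bas p + ell A B b a bas p' := by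
  funext i
  rcases fin2_cases i with rfl | rfl
  · simp only [Pi.add_apply, ell_zero_apply]
    simp [gd]
  · simp only [Pi.add_apply, ell_one_apply]
    simp

lemma ell_mul (p p' : B[X]) :
    ell A B b a bas (p * p') =
      chi A B b a p • ell A B b a bas p' + chi A B b a p' • ell A B b a bas p := by
  funext i
  rcases fin2_cases i with rfl | rfl
  · simp only [Pi.add_apply, Pi.smul_apply, smul_eq_mul, ell_zero_apply, eval_mul]
    rw [show gd A B bas (p.eval 0 * p'.eval 0)
        = p.eval 0 * gd A B bas (p'.eval 0) + p'.eval 0 * gd A B bas (p.eval 0) by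
      simp only [gd, Derivation.leibniz, map_add, map_smul, Finsupp.coe_add, Finsupp.coe_smul,
        Pi.add_apply, Pi.smul_apply, smul_eq_mul]]
    rw [map_add, map_mul, map_mul, chi_eval_zero, chi_eval_zero]
  · simp only [Pi.add_apply, Pi.smul_apply, smul_eq_mul, ell_one_apply, derivative_mul]
    rw [map_add, map_mul, map_mul]
    ring

lemma ell_q : ell A B b a bas (C b * X - C (algebraMap A B a)) = 0 := by
  funext i
  rcases fin2_cases i with rfl | rfl
  · rw [ell_zero_apply]
    rw [show eval 0 (C b * X - C (algebraMap A B a)) = -(algebraMap A B a) by simp,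
      show gd A B bas (-(algebraMap A B a)) = 0 by
        simp [gd, Derivation.map_algebraMap]]
    simp
  · rw [ell_one_apply]
    rw [show derivative (C b * X - C (algebraMap A B a)) = C b by
      simp]
    show psi A B b a b = _
    rw [psi_b]
    rfl

lemma ell_mem_J (p : B[X]) (hp : p ∈ Jq A B b a) : ell A B b a bas p = 0 := by
  rw [Ideal.mem_span_singleton] at hp
  obtain ⟨u, rfl⟩ := hp
  rw [ell_mul, ell_q, chi_q]
  simp

lemma ell_congr (p p' : B[X]) (h : mkJ A B b a p = mkJ A B b a p') :
    ell A B b a bas p = ell A B b a bas p' := by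
  rw [Ideal.Quotient.mk_eq_mk_iff_sub_mem] at h
  have := ell_mem_J A B b a bas _ h
  have h2 : p = p' + (p - p') := by ring
  rw [h2, ell_add, this, add_zero]

lemma ell_C (β : B) :
    ell A B b a bas (C β) = ![psi A B b a (gd A B bas β), 0] := by
  funext i
  rcases fin2_cases i with rfl | rfl
  · rw [ell_zero_apply]; simp
  · rw [ell_one_apply]; simp

noncomputable def dfun : Rg A B b a → (Fin 2 → Sg A B b a) :=
  fun r => ell A B b a bas (Function.surjInv Ideal.Quotient.mk_surjective r)

lemma dfun_mk (p : B[X]) :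
    dfun A B b a bas (mkJ A B b a p) = ell A B b a bas p :=
  ell_congr A B b a bas _ _ (Function.surjInv_eq _ _)

lemma smul_Rg_Sg (r : Rg A B b a) (s : Sg A B b a) :
    r • s = Ideal.Quotient.mk (Ig A B b a) r * s := by
  obtain ⟨t, rfl⟩ := Ideal.Quotient.mk_surjective s
  rfl

lemma smul_A_Rg (x : A) (p : B[X]) :
    x • (mkJ A B b a p) = mkJ A B b a (algebraMap A B[X] x * p) := by
  rw [← Algebra.smul_def, ← Ideal.Quotient.mk_eq_mk, ← Submodule.Quotient.mk_smul]
  rfl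

lemma smul_A_Sg (x : A) (s : Sg A B b a) :
    x • s = psi A B b a (algebraMap A B x) * s := by
  obtain ⟨t, rfl⟩ := Ideal.Quotient.mk_surjective s
  rw [show x • (Ideal.Quotient.mk (Ig A B b a) t) = Ideal.Quotient.mk (Ig A B b a) (x • t) by
    rw [← Ideal.Quotient.mk_eq_mk, ← Submodule.Quotient.mk_smul]; rfl]
  obtain ⟨p, rfl⟩ := Ideal.Quotient.mk_surjective t
  rw [smul_A_Rg, map_mul]
  rw [show (algebraMap A B[X]) x = C (algebraMap A B x) from Polynomial.algebraMap_apply x]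
  rfl

noncomputable def D2 : Derivation A (Rg A B b a) (Fin 2 → Sg A B b a) where
  toFun := dfun A B b a bas
  map_add' r r' := by
    obtain ⟨p, rfl⟩ := Ideal.Quotient.mk_surjective r
    obtain ⟨p', rfl⟩ := Ideal.Quotient.mk_surjective r'
    show dfun A B b a bas _ = dfun A B b a bas _ + dfun A B b a bas _
    rw [← map_add, dfun_mk, dfun_mk, dfun_mk, ell_add]
  map_smul' x r := by
    obtain ⟨p, rfl⟩ := Ideal.Quotient.mk_surjective r
    show dfun A B b a bas _ = (RingHom.id A) x • dfun A B b a bas _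
    rw [smul_A_Rg, dfun_mk, dfun_mk, Polynomial.algebraMap_apply, ell_mul, ell_C]
    rw [show gd A B bas (algebraMap A B x) = 0 by simp [gd, Derivation.map_algebraMap]]
    funext i
    simp only [RingHom.id_apply, Pi.add_apply, Pi.smul_apply, smul_eq_mul, map_zero,
      Matrix.smul_cons, smul_zero, Matrix.smul_empty]
    rw [smul_A_Sg]
    rcases fin2_cases i with rfl | rfl <;>
      simp only [Matrix.cons_val_zero, Matrix.cons_val_one, Matrix.head_cons, mul_zero, add_zero,
        smul_eq_mul, Pi.add_apply] <;>
      first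
        | rfl
        | ring_nf
        | (simp only [chi, psi, RingHom.comp_apply]; ring)
  map_one_eq_zero' := by
    show dfun A B b a bas 1 = 0
    rw [show (1 : Rg A B b a) = mkJ A B b a 1 from (map_one _).symm, dfun_mk]
    funext i
    rcases fin2_cases i with rfl | rfl
    · rw [ell_zero_apply]
      simp [gd]
    · rw [ell_one_apply]
      simp
  leibniz' r r' := by
    obtain ⟨p, rfl⟩ := Ideal.Quotient.mk_surjective r
    obtain ⟨p', rfl⟩ := Ideal.Quotient.mk_surjective r'
    show dfun A B b a bas _ =
      mkJ A B b a p • dfun A B b a bas (mkJ A B b a p')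
        + mkJ A B b a p' • dfun A B b a bas (mkJ A B b a p)
    rw [← map_mul, dfun_mk, dfun_mk, dfun_mk, ell_mul]
    funext i
    simp only [Pi.add_apply, Pi.smul_apply, smul_eq_mul]
    rw [smul_Rg_Sg, smul_Rg_Sg]
    rfl

noncomputable def piMap : Ω[Rg A B b a⁄A] →ₗ[Rg A B b a] (Fin 2 → Sg A B b a) :=
  (D2 A B b a bas).liftKaehlerDifferential

lemma piMap_D (r : Rg A B b a) :
    piMap A B b a bas (KaehlerDifferential.D A (Rg A B b a) r) = dfun A B b a bas r :=
  Derivation.liftKaehlerDifferential_comp_D _ _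

lemma dfun_Cb (hbas : bas 0 = KaehlerDifferential.D A B b) :
    dfun A B b a bas (mkJ A B b a (C b)) = ![1, 0] := by
  rw [dfun_mk, ell_C, show gd A B bas b = 1 by simp [gd, ← hbas]]
  simp

lemma dfun_X : dfun A B b a bas (mkJ A B b a X) = ![0, 1] := by
  rw [dfun_mk]
  funext i
  rcases fin2_cases i with rfl | rfl
  · rw [ell_zero_apply]
    simp [gd]
  · rw [ell_one_apply]
    simp

lemma algebraMap_B_Rg (y : B) :
    algebraMap B (Rg A B b a) y = mkJ A B b a (C y) := by
  rw [← Ideal.Quotient.mk_algebraMap, Polynomial.algebraMap_eq]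

lemma D_mk_C (hbas : bas 0 = KaehlerDifferential.D A B b) (β : B) :
    KaehlerDifferential.D A (Rg A B b a) (mkJ A B b a (C β)) =
      mkJ A B b a (C (gd A B bas β)) •
        KaehlerDifferential.D A (Rg A B b a) (mkJ A B b a (C b)) := by
  have h1 : KaehlerDifferential.D A B β
      = gd A B bas β • KaehlerDifferential.D A B b := by
    conv_lhs => rw [← Module.Basis.sum_repr bas (KaehlerDifferential.D A B β)]
    rw [Fin.sum_univ_one, hbas]
    rfl
  have h2 := congrArg (KaehlerDifferential.map A A B (Rg A B b a)) h1
  rw [KaehlerDifferential.map_D, map_smul, KaehlerDifferential.map_D] at h2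
  rw [algebraMap_B_Rg, algebraMap_B_Rg] at h2
  rw [h2, ← algebraMap_smul (Rg A B b a) (gd A B bas β), algebraMap_B_Rg]

noncomputable def fgen : (Fin 2 → Rg A B b a) →ₗ[Rg A B b a] Ω[Rg A B b a⁄A] where
  toFun v := v 0 • KaehlerDifferential.D A (Rg A B b a) (mkJ A B b a (C b))
    + v 1 • KaehlerDifferential.D A (Rg A B b a) (mkJ A B b a X)
  map_add' v w := by
    simp only [Pi.add_apply, add_smul]
    abel
  map_smul' r v := by
    simp only [Pi.smul_apply, smul_eq_mul, RingHom.id_apply, smul_add, mul_smul]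

lemma fgen_apply (v : Fin 2 → Rg A B b a) :
    fgen A B b a v = v 0 • KaehlerDifferential.D A (Rg A B b a) (mkJ A B b a (C b))
      + v 1 • KaehlerDifferential.D A (Rg A B b a) (mkJ A B b a X) := rfl

lemma D_mem_range (hbas : bas 0 = KaehlerDifferential.D A B b) (r : Rg A B b a) :
    KaehlerDifferential.D A (Rg A B b a) r ∈ LinearMap.range (fgen A B b a) := by
  set N := LinearMap.range (fgen A B b a)
  have hu : KaehlerDifferential.D A (Rg A B b a) (mkJ A B b a (C b)) ∈ N := by
    refine ⟨Pi.single 0 1, ?_⟩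
    rw [fgen_apply]
    simp
  have hw : KaehlerDifferential.D A (Rg A B b a) (mkJ A B b a X) ∈ N := by
    refine ⟨Pi.single 1 1, ?_⟩
    rw [fgen_apply]
    simp
  obtain ⟨p, rfl⟩ := Ideal.Quotient.mk_surjective r
  induction p using Polynomial.induction_on' with
  | add p q hp hq => rw [map_add, map_add]; exact add_mem hp hq
  | monomial n β =>
    rw [← Polynomial.C_mul_X_pow_eq_monomial, map_mul, map_pow, Derivation.leibniz,
      Derivation.leibniz_pow, D_mk_C A B b a bas hbas]
    refine add_mem (Submodule.smul_mem _ _ (nsmul_mem (Submodule.smul_mem _ _ hw) n)) ?_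
    exact Submodule.smul_mem _ _ (Submodule.smul_mem _ _ hu)

lemma fgen_surjective (hbas : bas 0 = KaehlerDifferential.D A B b) :
    Function.Surjective (fgen A B b a) := by
  rw [← LinearMap.range_eq_top, eq_top_iff,
    ← KaehlerDifferential.span_range_derivation, Submodule.span_le]
  rintro _ ⟨r, rfl⟩
  exact D_mem_range A B b a bas hbas r

lemma fgen_rel : fgen A B b a ![mkJ A B b a X, mkJ A B b a (C b)] = 0 := by
  rw [fgen_apply]
  simp only [Matrix.cons_val_zero, Matrix.cons_val_one, Matrix.head_cons]
  rw [add_comm, ← Derivation.leibniz]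
  rw [show mkJ A B b a (C b) * mkJ A B b a X = mkJ A B b a (C (algebraMap A B a)) by
    rw [← map_mul, Ideal.Quotient.mk_eq_mk_iff_sub_mem]
    exact Ideal.subset_span rfl]
  rw [← Polynomial.algebraMap_apply, Ideal.Quotient.mk_algebraMap,
    Derivation.map_algebraMap]

lemma piMap_surjective (hbas : bas 0 = KaehlerDifferential.D A B b) :
    Function.Surjective (piMap A B b a bas) := by
  intro m
  obtain ⟨r0, hr0⟩ := Ideal.Quotient.mk_surjective (m 0)
  obtain ⟨r1, hr1⟩ := Ideal.Quotient.mk_surjective (m 1)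
  refine ⟨r0 • KaehlerDifferential.D A (Rg A B b a) (mkJ A B b a (C b))
    + r1 • KaehlerDifferential.D A (Rg A B b a) (mkJ A B b a X), ?_⟩
  rw [map_add, map_smul, map_smul, piMap_D, piMap_D, dfun_Cb A B b a bas hbas, dfun_X]
  funext i
  rcases fin2_cases i with rfl | rfl <;>
    simp only [Pi.add_apply, Pi.smul_apply, Matrix.cons_val_zero, Matrix.cons_val_one,
      Matrix.head_cons, smul_Rg_Sg, mul_one, mul_zero, add_zero, zero_add, hr0, hr1]

end FitAux

open FitAux

/-- Let `A` be a commutative ring, `B` a smooth `A`-algebra with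
`Ω¹_{B/A}` free of rank one on the basis `db` (`b ∈ B` a regular element), `a ∈ A`,
and `R₂ = B[T]/(bT - a)`. Then the first Fitting ideal of the `R₂`-module
`Ω¹_{R₂/A}` is the ideal generated by the images of `b` and `T`. -/
theorem fittingIdeal_one_kaehler
    (A B : Type u) [CommRing A] [CommRing B] [Algebra A B] [Algebra.Smooth A B]
    (b : B) (hb : b ∈ nonZeroDivisors B) (a : A)
    (bas : Module.Basis (Fin 1) B (Ω[B⁄A])) (hbas : bas 0 = KaehlerDifferential.D A B b) :
    fittingIdeal (Polynomial B ⧸ Ideal.span {C b * X - C (algebraMap A B a)})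
        (Ω[(Polynomial B ⧸ Ideal.span {C b * X - C (algebraMap A B a)})⁄A]) 1 =
      Ideal.span
        {Ideal.Quotient.mk (Ideal.span {C b * X - C (algebraMap A B a)}) (C b),
         Ideal.Quotient.mk (Ideal.span {C b * X - C (algebraMap A B a)}) X} := by
  classical
  show fittingIdeal (Rg A B b a) (Ω[Rg A B b a⁄A]) 1 = Ig A B b a
  apply le_antisymm
  · -- the Fitting ideal is contained in (b, X)
    unfold fittingIdeal
    apply iSup_le; intro n
    apply iSup_le; intro f
    apply iSup_le; intro hf
    rw [Ideal.span_le]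
    rintro r ⟨ρ, c, hc, rfl⟩
    have hmem : (Matrix.det (Matrix.of fun i j => c j (ρ i))) ∈ Ig A B b a := by
      rw [← Ideal.Quotient.eq_zero_iff_mem, RingHom.map_det (R := Rg A B b a) (S := Sg A B b a) (Ideal.Quotient.mk (Ig A B b a))]
      set mkI := Ideal.Quotient.mk (Ig A B b a) with hmkI
      set F : Matrix (Fin 2) (Fin n) (Sg A B b a) :=
        Matrix.of fun i j => piMap A B b a bas (f (Pi.single j 1)) i with hF
      have key : ∀ v : Fin n → Rg A B b a,
          F.mulVec (fun j => mkI (v j)) = piMap A B b a bas (f v) := by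
        intro v
        have hv : v = ∑ j, v j • (Pi.single j 1 : Fin n → Rg A B b a) := by
          conv_lhs => rw [← Finset.univ_sum_single v]
          refine Finset.sum_congr rfl fun j _ => ?_
          funext t
          rw [Pi.smul_apply, Pi.single_apply, Pi.single_apply, smul_eq_mul, mul_ite, mul_one,
            mul_zero]
        funext i
        conv_rhs => rw [hv]
        rw [map_sum, map_sum]
        rw [Finset.sum_apply]
        rw [Matrix.mulVec]
        simp only [dotProduct]
        apply Finset.sum_congr rfl
        intro j _
        rw [LinearMap.map_smul, LinearMap.map_smul, Pi.smul_apply, smul_Rg_Sg]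
        exact mul_comm (G := Sg A B b a) _ _
      have hvv : ∀ w : Fin 2, ∃ v : Fin n → Rg A B b a,
          piMap A B b a bas (f v) = Pi.single w 1 := by
        intro w
        obtain ⟨ω, hω⟩ := piMap_surjective A B b a bas hbas (Pi.single w 1)
        obtain ⟨v, rfl⟩ := hf ω
        exact ⟨v, hω⟩
      choose vv hvvs using hvv
      set G : Matrix (Fin n) (Fin 2) (Sg A B b a) := fun j w => mkI (vv w j) with hG
      have hFG : F * G = 1 := by
        ext i w
        rw [Matrix.mul_apply]
        have : ∑ j, F i j * G j w = F.mulVec (fun j => mkI (vv w j)) i := rfl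
        rw [this, key, hvvs]
        rw [Matrix.one_apply, Pi.single_apply]
      have hcrel : ∀ j', F.mulVec (fun t => mkI (c j' t)) = 0 := by
        intro j'
        rw [key, hc, map_zero]
      have := det_rel_zero (by omega) F G hFG (fun j' t => mkI (c j' t)) hcrel ρ
      exact this
    exact hmem
  · -- (b, X) is contained in the Fitting ideal
    have hle : Ideal.span { r : Rg A B b a |
        ∃ (ρ : Fin (2 - 1) → Fin 2) (c : Fin (2 - 1) → Fin 2 → Rg A B b a),
          (∀ j, fgen A B b a (c j) = 0)
            ∧ r = Matrix.det (Matrix.of fun i j => c j (ρ i)) }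
        ≤ fittingIdeal (Rg A B b a) (Ω[Rg A B b a⁄A]) 1 := by
      unfold fittingIdeal
      exact le_iSup_of_le 2 (le_iSup_of_le (fgen A B b a)
        (le_iSup_of_le (fgen_surjective A B b a bas hbas) le_rfl))
    rw [Ideal.span_le]
    rintro r (rfl | rfl)
    · apply hle
      apply Ideal.subset_span
      refine ⟨fun _ => 1, fun _ => ![mkJ A B b a X, mkJ A B b a (C b)],
        fun _ => fgen_rel A B b a, ?_⟩
      rw [Matrix.det_fin_one]
      rfl
    · apply hle
      apply Ideal.subset_span
      refine ⟨fun _ => 0, fun _ => ![mkJ A B b a X, mkJ A B b a (C b)],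
        fun _ => fgen_rel A B b a, ?_⟩
      rw [Matrix.det_fin_one]
      rfl
end

section
/- Let A be a commutative ring, B a smooth A-algebra with Ω^1_{B/A} free of rank one, b ∈ B, a ∈ A, and R_1 = B[T]/(b - aT). Then Ω^1_{R_1/A} is a free R_1-module of rank one. -/
open Polynomial
universe u
namespace KaehlerAux
noncomputable section
variable {A B : Type u} [CommRing A] [CommRing B] [Algebra A B] (b : B) (a : A)

abbrev f : B[X] := C b - C (algebraMap A B a) * X
abbrev Quot := B[X] ⧸ Ideal.span {f b a}
abbrev T : Quot b a := Ideal.Quotient.mk _ (X : B[X])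

lemma algebraMap_quot (q : B[X]) :
    algebraMap B[X] (Quot b a) q = (q.map (algebraMap B (Quot b a))).eval (T b a) := by
  rw [Polynomial.eval_map, ← Polynomial.aeval_def]
  have : algebraMap B[X] (Quot b a) q = Ideal.Quotient.mkₐ B (Ideal.span {f b a}) q := rfl
  rw [this]
  conv_lhs => rw [← Polynomial.aeval_X_left_apply q, ← Polynomial.aeval_algHom_apply]
  rfl

variable (bas : Module.Basis (Fin 1) B (Ω[B⁄A]))

/-- `ω ↦ a * ψ(repr ω)` -/
def L : Ω[B⁄A] →ₗ[B] Quot b a where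
  toFun ω := algebraMap A (Quot b a) a * algebraMap B (Quot b a) (bas.repr ω 0)
  map_add' ω₁ ω₂ := by simp [mul_add]
  map_smul' c ω := by
    simp only [map_smul, Finsupp.smul_apply, smul_eq_mul, map_mul, RingHom.id_apply]
    rw [algebra_compatible_smul (Quot b a) c, smul_eq_mul]
    ring

def δ₁ : Derivation A B (Quot b a) := (L b a bas).compDer (KaehlerDifferential.D A B)

lemma δ₁_apply (c : B) :
    δ₁ b a bas c = algebraMap A (Quot b a) a
      * algebraMap B (Quot b a) (bas.repr (KaehlerDifferential.D A B c) 0) := rfl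

/-- evaluation of a `PolynomialModule B (Quot b a)` at `T`, as a `B[X]`-linear map. -/
def evB : PolynomialModule B (Quot b a) →ₗ[B[X]] Quot b a where
  toFun p := PolynomialModule.eval (T b a)
    (PolynomialModule.map (Quot b a)
      ((LinearMap.id : Quot b a →ₗ[Quot b a] Quot b a).restrictScalars B) p)
  map_add' p q := by simp
  map_smul' q p := by
    simp only [PolynomialModule.map_smul, PolynomialModule.eval_smul, RingHom.id_apply]
    rw [Algebra.smul_def (A := Quot b a) q, algebraMap_quot, smul_eq_mul]

lemma evB_single (i : ℕ) (m : Quot b a) :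
    evB b a (PolynomialModule.single B i m) = T b a ^ i • m := by
  simp [evB]

def δ₂ : Derivation A B[X] (Quot b a) := (evB b a).compDer (δ₁ b a bas).mapCoeffs

def δ₀ : Derivation A B[X] (Quot b a) :=
  δ₂ b a bas + (Polynomial.mkDerivation B (1 : Quot b a)).restrictScalars A

lemma δ₂_C (c : B) : δ₂ b a bas (C c) = δ₁ b a bas c := by
  show evB b a ((δ₁ b a bas).mapCoeffs (C c)) = _
  rw [Derivation.mapCoeffs_C, evB_single]
  simp

lemma δ₀_C (c : B) : δ₀ b a bas (C c) = δ₁ b a bas c := by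
  show δ₂ b a bas (C c) + (Polynomial.mkDerivation B (1 : Quot b a)) (C c) = _
  rw [δ₂_C, Polynomial.mkDerivation_apply]
  simp

lemma δ₀_X : δ₀ b a bas (X : B[X]) = 1 := by
  show δ₂ b a bas X + (Polynomial.mkDerivation B (1 : Quot b a)) X = 1
  have h2 : δ₂ b a bas X = 0 := by
    show evB b a ((δ₁ b a bas).mapCoeffs X) = 0
    rw [Derivation.mapCoeffs_X, map_zero]
  rw [h2, Polynomial.mkDerivation_X, zero_add]

lemma δ₀_f (hbas : bas 0 = KaehlerDifferential.D A B b) : δ₀ b a bas (f b a) = 0 := by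
  have hb : δ₀ b a bas (C b) = algebraMap A (Quot b a) a := by
    rw [δ₀_C, δ₁_apply, ← hbas, bas.repr_self]
    simp
  have ha' : δ₀ b a bas (C (algebraMap A B a)) = 0 := by
    rw [δ₀_C, δ₁_apply]
    rw [show algebraMap A B a = algebraMap A B a from rfl]
    rw [Derivation.map_algebraMap]
    simp
  rw [map_sub, Derivation.leibniz, hb, ha', δ₀_X, smul_zero, add_zero]
  rw [algebra_compatible_smul (Quot b a) (C (algebraMap A B a)) (1 : Quot b a), smul_eq_mul,
    mul_one, algebraMap_quot]
  simp [IsScalarTower.algebraMap_apply A B (Quot b a)]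

lemma δ₀_ideal (hbas : bas 0 = KaehlerDifferential.D A B b) (p : B[X])
    (hp : p ∈ Ideal.span {f b a}) : δ₀ b a bas p = 0 := by
  rw [Ideal.mem_span_singleton] at hp
  obtain ⟨q, rfl⟩ := hp
  rw [Derivation.leibniz, δ₀_f b a bas hbas, smul_zero, add_zero,
    algebra_compatible_smul (Quot b a) (f b a),
    show algebraMap B[X] (Quot b a) (f b a) = 0 from
      Ideal.Quotient.eq_zero_iff_mem.mpr (Ideal.subset_span rfl)]
  simp

def δlin (hbas : bas 0 = KaehlerDifferential.D A B b) : Quot b a →ₗ[A] Quot b a :=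
  (Submodule.liftQ ((Ideal.span {f b a}).restrictScalars A)
      (δ₀ b a bas).toLinearMap
      (fun p hp ↦ δ₀_ideal b a bas ‹_› p hp)) ∘ₗ
    ((Submodule.Quotient.restrictScalarsEquiv A (Ideal.span {f b a})).symm.toLinearMap)


variable (hbas : bas 0 = KaehlerDifferential.D A B b)

lemma δlin_mk (p : B[X]) :
    δlin b a bas hbas (Ideal.Quotient.mk _ p) = δ₀ b a bas p := by
  simp only [δlin, LinearMap.coe_comp, LinearEquiv.coe_coe, Function.comp_apply]
  rw [show (Ideal.Quotient.mk (Ideal.span {f b a}) p : Quot b a)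
      = Submodule.Quotient.mk p from rfl,
    Submodule.Quotient.restrictScalarsEquiv_symm_mk]
  rfl

def δ : Derivation A (Quot b a) (Quot b a) where
  toLinearMap := δlin b a bas hbas
  map_one_eq_zero' := by
    rw [show (1 : Quot b a) = Ideal.Quotient.mk _ 1 from rfl]
    show δlin b a bas hbas _ = 0
    rw [δlin_mk]; simp
  leibniz' x y := by
    obtain ⟨p, rfl⟩ := Ideal.Quotient.mk_surjective x
    obtain ⟨q, rfl⟩ := Ideal.Quotient.mk_surjective y
    show δlin b a bas hbas _ = _ • δlin b a bas hbas _ + _ • δlin b a bas hbas _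
    rw [← map_mul, δlin_mk, δlin_mk, δlin_mk, Derivation.leibniz, smul_eq_mul, smul_eq_mul,
      algebra_compatible_smul (Quot b a) p, algebra_compatible_smul (Quot b a) q,
      smul_eq_mul, smul_eq_mul]
    rfl

lemma δ_T : δ b a bas hbas (T b a) = 1 := by
  show δlin b a bas hbas (Ideal.Quotient.mk _ X) = 1
  rw [δlin_mk, δ₀_X]

include bas hbas in
lemma span_dT :
    Submodule.span (Quot b a) {KaehlerDifferential.D A (Quot b a) (T b a)} = ⊤ := by
  rw [eq_top_iff, ← KaehlerDifferential.span_range_derivation A (Quot b a), Submodule.span_le]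
  rintro _ ⟨r, rfl⟩
  obtain ⟨p, rfl⟩ := Ideal.Quotient.mk_surjective r
  induction p using Polynomial.induction_on with
  | C c =>
    have h1 : (Ideal.Quotient.mk (Ideal.span {f b a}) (C c) : Quot b a)
        = algebraMap B (Quot b a) c := by
      rw [IsScalarTower.algebraMap_apply B B[X] (Quot b a), Polynomial.algebraMap_eq,
        Ideal.Quotient.algebraMap_eq]
    have h2 : KaehlerDifferential.D A B c
        = bas.repr (KaehlerDifferential.D A B c) 0 • KaehlerDifferential.D A B b := by
      conv_lhs => rw [← bas.sum_repr (KaehlerDifferential.D A B c)]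
      rw [Fin.sum_univ_one, hbas]
    have hb : (algebraMap B (Quot b a)) b = algebraMap A (Quot b a) a * T b a := by
      rw [IsScalarTower.algebraMap_apply A B (Quot b a),
        IsScalarTower.algebraMap_apply B B[X] (Quot b a),
        IsScalarTower.algebraMap_apply B B[X] (Quot b a), Polynomial.algebraMap_eq,
        Ideal.Quotient.algebraMap_eq]
      rw [show (Ideal.Quotient.mk (Ideal.span {f b a}) (C ((algebraMap A B) a)) : Quot b a)
          * T b a = Ideal.Quotient.mk _ (C ((algebraMap A B) a) * X) from (map_mul _ _ _).symm,
        Ideal.Quotient.eq]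
      exact Ideal.subset_span rfl
    rw [h1, ← KaehlerDifferential.map_D A A B (Quot b a)]
    rw [h2, map_smul, algebra_compatible_smul (Quot b a), KaehlerDifferential.map_D, hb,
      Derivation.leibniz, Derivation.map_algebraMap, smul_zero, add_zero]
    exact Submodule.smul_mem _ _
      (Submodule.smul_mem _ _ (Submodule.mem_span_singleton_self _))
  | add p q hp hq =>
    rw [map_add, map_add]; exact add_mem hp hq
  | monomial n c hn =>
    rw [show (Ideal.Quotient.mk (Ideal.span {f b a}) (C c * X ^ (n + 1)) : Quot b a)
        = Ideal.Quotient.mk _ (C c * X ^ n) * Ideal.Quotient.mk _ X by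
      rw [← map_mul]; ring_nf,
      Derivation.leibniz]
    exact add_mem (Submodule.smul_mem _ _ (Submodule.mem_span_singleton_self _))
      (Submodule.smul_mem _ _ hn)

end
end KaehlerAux

open KaehlerAux in
/-- Let `A` be a commutative ring, `B` a smooth `A`-algebra with
`Ω¹_{B/A}` free of rank one on the basis `db` (`b ∈ B`), `a ∈ A`, and
`R₁ = B[T]/(b - aT)`. Then `Ω¹_{R₁/A}` is a free `R₁`-module of rank one. -/
theorem kaehler_free_rank_one
    (A B : Type u) [CommRing A] [CommRing B] [Algebra A B] [Algebra.Smooth A B]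
    (b : B) (a : A)
    (bas : Module.Basis (Fin 1) B (Ω[B⁄A])) (hbas : bas 0 = KaehlerDifferential.D A B b) :
    Nonempty (Module.Basis (Fin 1) (Polynomial B ⧸ Ideal.span {C b - C (algebraMap A B a) * X})
      (Ω[(Polynomial B ⧸ Ideal.span {C b - C (algebraMap A B a) * X})⁄A])) := by
  classical
  let θ : Quot b a →ₗ[Quot b a] Ω[Quot b a⁄A] :=
    LinearMap.toSpanSingleton (Quot b a) (Ω[Quot b a⁄A])
      (KaehlerDifferential.D A (Quot b a) (T b a))
  have hsurj : Function.Surjective θ := by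
    rw [← LinearMap.range_eq_top, ← LinearMap.span_singleton_eq_range]
    exact span_dT b a bas hbas
  have key : ∀ r, (δ b a bas hbas).liftKaehlerDifferential (θ r) = r := by
    intro r
    simp only [θ, LinearMap.toSpanSingleton_apply, map_smul,
      Derivation.liftKaehlerDifferential_comp_D, δ_T, smul_eq_mul, mul_one]
  have hinj : Function.Injective θ := fun x y h => by rw [← key x, ← key y, h]
  exact ⟨(Module.Basis.singleton (Fin 1) (Quot b a)).map (LinearEquiv.ofBijective θ ⟨hinj, hsurj⟩)⟩
end

section
/- Let m > n ≥ 1, and Q̄ the set of cyclically strictly decreasing maps α : ℤ/n → ℤ/m. The cyclic group C_n = ℤ/n acts on Q̄ by α ↦ α(·+j), and the map sending α to its image (an n-element subset of ℤ/m) identifies the quotient Q̄/C_n with the set Q of n-element subsets of ℤ/m. In particular |Q̄| = n · C(m,n). -/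
/-- A map `α : ℤ/n → ℤ/m` is cyclically strictly decreasing if it admits a lift
`a : ℤ → ℤ` with `a(i) > a(i+1)` for all `i` and `a(i+n) = a(i) - m`. -/
def CyclicallyStrictlyDecreasing (n m : ℕ) (α : ZMod n → ZMod m) : Prop :=
  ∃ a : ℤ → ℤ,
    (∀ i : ℤ, ((a i : ZMod m)) = α (i : ZMod n)) ∧
    (∀ i : ℤ, a (i + 1) < a i) ∧
    (∀ i : ℤ, a (i + n) = a i - m)

namespace CSDAux

lemma cast_val {n : ℕ} [NeZero n] (t : ZMod n) : ((t.val : ℤ) : ZMod n) = t := by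
  rw [Int.cast_natCast]; exact ZMod.natCast_rightInverse t

lemma lift_periodic {n m : ℕ} (a : ℤ → ℤ) (hper : ∀ i : ℤ, a (i + n) = a i - m)
    (i q : ℤ) : a (i + n * q) = a i - m * q := by
  induction q using Int.induction_on with
  | zero => simp
  | succ k ih =>
    have h : i + (n : ℤ) * (k + 1) = (i + n * k) + n := by ring
    rw [h, hper, ih]; ring
  | pred k ih =>
    have h : i + (n : ℤ) * (-k) = (i + n * (-k - 1)) + n := by ring
    rw [h, hper] at ih
    have : a (i + (n:ℤ) * (-(k:ℤ) - 1)) = a i - m * (-(k:ℤ)) + m := by omega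
    rw [this]; ring

/-- Core step: if `b` is a strict cyclic lift, `x ≡ b i`, `y < x`, and `y` is congruent to
some value of `b`, then the step of `b` at `i` is at most `x - y`. -/
lemma core {n m : ℕ} (hn : 1 ≤ n) (hm : 1 ≤ m) (b : ℤ → ℤ)
    (hdec : ∀ i : ℤ, b (i + 1) < b i) (hper : ∀ i : ℤ, b (i + n) = b i - m)
    (i x y : ℤ) (hyx : y < x) (hx : (x : ZMod m) = (b i : ZMod m))
    (hy : ∃ j : ℤ, (b j : ZMod m) = (y : ZMod m)) :
    b i - b (i + 1) ≤ x - y := by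
  by_contra hlt
  push_neg at hlt
  obtain ⟨j, hj⟩ := hy
  have hanti : StrictAnti b := strictAnti_int_of_succ_lt hdec
  have hnpos : (0:ℤ) < n := by exact_mod_cast hn
  set q : ℤ := -((j - i - 1) / n) with hq
  have hj'eq : j + (n:ℤ) * q = i + 1 + (j - i - 1) % n := by
    rw [hq, Int.emod_def]; ring
  have hmod0 : 0 ≤ (j - i - 1) % (n:ℤ) := Int.emod_nonneg _ (by omega)
  have hmodlt : (j - i - 1) % (n:ℤ) < n := Int.emod_lt_of_pos _ hnpos
  set j' : ℤ := j + (n:ℤ) * q with hj'def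
  have hjlb : i + 1 ≤ j' := by omega
  have hjub : j' ≤ i + n := by omega
  have hbj' : (b j' : ZMod m) = (y : ZMod m) := by
    rw [hj'def, lift_periodic b hper j q]
    push_cast
    simp [ZMod.natCast_self, hj]
  have h1 : b j' ≤ b (i + 1) := hanti.antitone hjlb
  have h2 : b (i + n) ≤ b j' := hanti.antitone hjub
  have h3 : b (i + n) = b i - m := hper i
  have hd : (m : ℤ) ∣ (b i - (x - y)) - b j' := by
    rw [← ZMod.intCast_zmod_eq_zero_iff_dvd]
    push_cast
    rw [← hx, hbj']
    ring
  have hdpos : 0 < (b i - (x - y)) - b j' := by omega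
  have := Int.le_of_dvd hdpos hd
  omega


lemma csd_unique {n m : ℕ} (hn : 1 ≤ n) (hm : n < m)
    {α β : ZMod n → ZMod m}
    (hα : CyclicallyStrictlyDecreasing n m α) (hβ : CyclicallyStrictlyDecreasing n m β)
    (hr : Set.range α = Set.range β) (h0 : α 0 = β 0) : α = β := by
  haveI : NeZero n := ⟨by omega⟩
  obtain ⟨a, hac, had, hap⟩ := hα
  obtain ⟨b, hbc, hbd, hbp⟩ := hβ
  have hm1 : 1 ≤ m := by omega
  have key : ∀ N : ℕ, (a (N : ℤ) : ZMod m) = (b (N : ℤ) : ZMod m) := by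
    intro N
    induction N with
    | zero =>
      rw [Nat.cast_zero, hac 0, hbc 0]
      simpa using h0
    | succ N ih =>
      set i : ℤ := (N : ℤ) with hi
      have hy1 : ∃ j : ℤ, (b j : ZMod m) = (a (i+1) : ZMod m) := by
        have hmem : α ((i+1 : ℤ) : ZMod n) ∈ Set.range β := by
          rw [← hr]; exact Set.mem_range_self _
        obtain ⟨t, ht⟩ := hmem
        refine ⟨(t.val : ℤ), ?_⟩
        rw [hbc, cast_val, ht, ← hac]
      have hy2 : ∃ j : ℤ, (a j : ZMod m) = (b (i+1) : ZMod m) := by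
        have hmem : β ((i+1 : ℤ) : ZMod n) ∈ Set.range α := by
          rw [hr]; exact Set.mem_range_self _
        obtain ⟨t, ht⟩ := hmem
        refine ⟨(t.val : ℤ), ?_⟩
        rw [hac, cast_val, ht, ← hbc]
      have h1 : b i - b (i + 1) ≤ a i - a (i + 1) :=
        core hn hm1 b hbd hbp i (a i) (a (i+1)) (had i) ih hy1
      have h2 : a i - a (i + 1) ≤ b i - b (i + 1) :=
        core hn hm1 a had hap i (b i) (b (i+1)) (hbd i) ih.symm hy2
      have hkl : a i - a (i+1) = b i - b (i+1) := le_antisymm h2 h1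
      have hgoal : (a (i+1) : ZMod m) = (b (i+1) : ZMod m) := by
        calc (a (i+1) : ZMod m) = ((a i : ZMod m)) - ((a i - a (i+1) : ℤ) : ZMod m) := by
              push_cast; ring
          _ = ((b i : ZMod m)) - ((b i - b (i+1) : ℤ) : ZMod m) := by rw [ih, hkl]
          _ = (b (i+1) : ZMod m) := by push_cast; ring
      have hc : ((N + 1 : ℕ) : ℤ) = i + 1 := by push_cast [hi]; ring
      rw [hc]; exact hgoal
  funext t
  have h1 := hac ((t.val : ℕ) : ℤ)
  have h2 := hbc ((t.val : ℕ) : ℤ)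
  rw [cast_val] at h1 h2
  rw [← h1, ← h2]
  exact key t.val

lemma csd_window {n m : ℕ} {a : ℤ → ℤ} (hanti : StrictAnti a)
    (hap : ∀ i : ℤ, a (i + n) = a i - m) {u v : ℤ} (huv : u ≤ v) (h : v < u + n) :
    0 ≤ a u - a v ∧ a u - a v < m := by
  refine ⟨by have := hanti.antitone huv; omega, ?_⟩
  have h1 : a (u + n) < a v := hanti h
  have h2 := hap u
  omega

lemma csd_inj {n m : ℕ} (hn : 1 ≤ n) (hm : n < m) {α : ZMod n → ZMod m}
    (hα : CyclicallyStrictlyDecreasing n m α) : Function.Injective α := by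
  haveI : NeZero n := ⟨by omega⟩
  obtain ⟨a, hac, had, hap⟩ := hα
  have hanti : StrictAnti a := strictAnti_int_of_succ_lt had
  intro s t hst
  have hs := hac ((s.val : ℕ) : ℤ); rw [cast_val] at hs
  have ht := hac ((t.val : ℕ) : ℤ); rw [cast_val] at ht
  have hdvd : (m:ℤ) ∣ a (s.val : ℤ) - a (t.val : ℤ) := by
    rw [← ZMod.intCast_zmod_eq_zero_iff_dvd]
    push_cast
    rw [hs, ht, hst]
    ring
  have hsv : (s.val : ℤ) < n := by exact_mod_cast s.val_lt
  have htv : (t.val : ℤ) < n := by exact_mod_cast t.val_lt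
  have heq : a (s.val : ℤ) = a (t.val : ℤ) := by
    rcases le_total (s.val : ℤ) (t.val : ℤ) with h | h
    · have hw := csd_window hanti hap h (by omega)
      have habs : |a (s.val : ℤ) - a (t.val : ℤ)| < m :=
        abs_sub_lt_iff.mpr ⟨by omega, by omega⟩
      have := Int.eq_zero_of_abs_lt_dvd hdvd habs
      omega
    · have hw := csd_window hanti hap h (by omega)
      have habs : |a (s.val : ℤ) - a (t.val : ℤ)| < m :=
        abs_sub_lt_iff.mpr ⟨by omega, by omega⟩
      have := Int.eq_zero_of_abs_lt_dvd hdvd habs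
      omega
  have : (s.val : ℤ) = (t.val : ℤ) := hanti.injective heq
  exact ZMod.val_injective n (by exact_mod_cast this)


lemma csd_exists {n m : ℕ} (hn : 1 ≤ n) (hm : n < m) (B : Finset (ZMod m))
    (hB : B.card = n) (x : ZMod m) (hx : x ∈ B) :
    ∃ α : ZMod n → ZMod m, CyclicallyStrictlyDecreasing n m α ∧
      α 0 = x ∧ ∀ z : ZMod m, z ∈ B ↔ z ∈ Set.range α := by
  haveI : NeZero n := ⟨by omega⟩
  haveI : NeZero m := ⟨by omega⟩
  classical
  have hnpos : (0:ℤ) < n := by exact_mod_cast hn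
  set S : Finset ℕ := B.image (fun y => (x - y).val) with hS
  have hSinj : Set.InjOn (fun y : ZMod m => (x - y).val) B := by
    intro y1 _ y2 _ h
    have h2 : x - y1 = x - y2 := ZMod.val_injective m h
    exact sub_right_injective h2
  have hScard : S.card = n := by rw [hS, Finset.card_image_of_injOn hSinj, hB]
  set c : Fin n → ℕ := fun r => S.orderEmbOfFin hScard r with hcdef
  have hcmono : StrictMono c := (S.orderEmbOfFin hScard).strictMono
  have hcmem : ∀ r, c r ∈ S := fun r => S.orderEmbOfFin_mem hScard r
  have hclt : ∀ r, c r < m := by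
    intro r
    obtain ⟨y, _, hy⟩ := Finset.mem_image.mp (hcmem r)
    rw [← hy]; exact ZMod.val_lt _
  have h0S : (0:ℕ) ∈ S := Finset.mem_image.mpr ⟨x, hx, by simp⟩
  have hc0' : ∀ r0 : Fin n, (r0 : ℕ) = 0 → c r0 = 0 := by
    intro r0 h0
    have h1 : (0:ℕ) ∈ Set.range (S.orderEmbOfFin hScard) := by
      rw [Finset.range_orderEmbOfFin]; exact_mod_cast h0S
    obtain ⟨r1, hr1⟩ := h1
    have hle : r0 ≤ r1 := by rw [Fin.le_def, h0]; exact Nat.zero_le _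
    have h2 : c r0 ≤ c r1 := hcmono.monotone hle
    have hr1' : c r1 = 0 := hr1
    omega
  -- the lift index
  have hrpf : ∀ i : ℤ, (i % (n:ℤ)).toNat < n := by
    intro i
    have h1 := Int.emod_nonneg i (by omega : (n:ℤ) ≠ 0)
    have h2 := Int.emod_lt_of_pos i hnpos
    omega
  set r : ℤ → Fin n := fun i => ⟨(i % (n:ℤ)).toNat, hrpf i⟩ with hrdef
  have hrval : ∀ i : ℤ, ((r i : Fin n) : ℕ) = ((i : ZMod n)).val := by
    intro i
    have h := ZMod.val_intCast (n := n) i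
    show (i % (n:ℤ)).toNat = _
    omega
  set a : ℤ → ℤ := fun i => (x.val : ℤ) - (c (r i) : ℤ) - m * (i / n) with hadef
  set α : ZMod n → ZMod m := fun t => x - ((c ⟨t.val, ZMod.val_lt t⟩ : ℕ) : ZMod m) with hαdef
  have hxval : ((x.val : ℕ) : ZMod m) = x := ZMod.natCast_rightInverse x
  have hcast : ∀ i : ℤ, ((a i : ℤ) : ZMod m) = α (i : ZMod n) := by
    intro i
    have hre : r i = ⟨(i : ZMod n).val, ZMod.val_lt _⟩ := Fin.ext (hrval i)
    rw [hadef, hαdef]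
    simp only []
    rw [hre]
    push_cast
    rw [hxval, ZMod.natCast_self]
    ring
  have hper : ∀ i : ℤ, a (i + n) = a i - m := by
    intro i
    have e1 : (i + (n:ℤ)) % n = i % n := by
      rw [show i + (n:ℤ) = i + n * 1 by ring, Int.add_mul_emod_self_left]
    have e2 : (i + (n:ℤ)) / n = i / n + 1 := by
      rw [show i + (n:ℤ) = i + n * 1 by ring, Int.add_mul_ediv_left _ _ (by omega : (n:ℤ) ≠ 0)]
    have hre : r (i + n) = r i := Fin.ext (by
      show ((i + (n:ℤ)) % (n:ℤ)).toNat = (i % (n:ℤ)).toNat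
      rw [e1])
    rw [hadef]
    simp only []
    rw [hre, e2]
    ring
  have hdec : ∀ i : ℤ, a (i + 1) < a i := by
    intro i
    have hdm := Int.mul_ediv_add_emod i n
    set s : ℤ := i % n with hs
    set qq : ℤ := i / n with hq
    have hs0 : 0 ≤ s := Int.emod_nonneg i (by omega)
    have hsn : s < n := Int.emod_lt_of_pos i hnpos
    rcases lt_or_eq_of_le (by omega : s + 1 ≤ n) with hcase | hcase
    · -- no wraparound
      have e1 : (i + 1) % n = s + 1 := by
        rw [show i + 1 = (s + 1) + (n:ℤ) * qq by omega, Int.add_mul_emod_self_left,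
          Int.emod_eq_of_lt (by omega) (by omega)]
      have e2 : (i + 1) / n = qq := by
        rw [show i + 1 = (s + 1) + (n:ℤ) * qq by omega,
          Int.add_mul_ediv_left _ _ (by omega : (n:ℤ) ≠ 0),
          Int.ediv_eq_zero_of_lt (by omega) (by omega)]
        ring
      have hlt : c (r i) < c (r (i+1)) := by
        apply hcmono
        show (r i : ℕ) < (r (i+1) : ℕ)
        show (i % (n:ℤ)).toNat < ((i+1) % (n:ℤ)).toNat
        rw [e1, ← hs]
        omega
      rw [hadef]; simp only []
      rw [e2, ← hq]
      have : (c (r i) : ℤ) < (c (r (i+1)) : ℤ) := by exact_mod_cast hlt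
      omega
    · -- wraparound: s = n - 1
      have hkey : i + 1 = 0 + (n:ℤ) * (qq + 1) := by rw [mul_add, mul_one]; omega
      have e2 : (i + 1) / n = qq + 1 := by
        rw [hkey, Int.add_mul_ediv_left _ _ (by omega : (n:ℤ) ≠ 0)]
        simp
      have hci : (c (r i) : ℤ) < m := by exact_mod_cast hclt (r i)
      have hcnn : (0:ℤ) ≤ (c (r (i+1)) : ℤ) := by positivity
      rw [hadef]; simp only []
      rw [e2, ← hq]
      have e3 : (m:ℤ) * (qq + 1) = m * qq + m := by ring
      rw [e3]
      omega
  have hrange : ∀ z : ZMod m, z ∈ B ↔ z ∈ Set.range α := by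
    intro z
    constructor
    · intro hz
      have hmem : (x - z).val ∈ S := Finset.mem_image.mpr ⟨z, hz, rfl⟩
      have : (x - z).val ∈ Set.range (S.orderEmbOfFin hScard) := by
        rw [Finset.range_orderEmbOfFin]; exact_mod_cast hmem
      obtain ⟨r0, hr0⟩ := this
      refine ⟨((r0 : ℕ) : ZMod n), ?_⟩
      have hval : (((r0 : ℕ) : ZMod n)).val = (r0 : ℕ) := ZMod.val_natCast_of_lt r0.isLt
      rw [hαdef]
      simp only []
      have hidx : (⟨(((r0 : ℕ) : ZMod n)).val, ZMod.val_lt _⟩ : Fin n) = r0 := Fin.ext hval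
      have hcr0 : c r0 = (x - z).val := hr0
      rw [hidx, hcr0]
      have : (((x - z).val : ℕ) : ZMod m) = x - z := ZMod.natCast_rightInverse _
      rw [this]
      ring
    · rintro ⟨t, rfl⟩
      rw [hαdef]
      simp only []
      obtain ⟨y, hy, hyv⟩ := Finset.mem_image.mp (hcmem ⟨t.val, ZMod.val_lt t⟩)
      rw [← hyv]
      have : (((x - y).val : ℕ) : ZMod m) = x - y := ZMod.natCast_rightInverse _
      rw [this]
      simpa using hy
  refine ⟨α, ⟨a, hcast, hdec, hper⟩, ?_, hrange⟩
  rw [hαdef]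
  simp only []
  have hend : c ⟨(0 : ZMod n).val, ZMod.val_lt _⟩ = 0 := hc0' _ (by simp)
  rw [hend]
  simp

end CSDAux

/-- For `m > n ≥ 1`, the cyclic group `C_n = ℤ/n` acts on the
set `Q̄` of cyclically strictly decreasing maps `ℤ/n → ℤ/m` by `α ↦ α(· + j)`,
and the map `α ↦ range α` identifies `Q̄/C_n` with the set `Q` of `n`-element
subsets of `ℤ/m`: it is surjective onto `Q`, its fibers are exactly the
`C_n`-orbits, and consequently `|Q̄| = n ⋅ C(m, n)`. -/
theorem Qbar_mod_Cn_equiv_subsets (n m : ℕ) (hn : 1 ≤ n) (hm : n < m) :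
    (∀ B : Finset (ZMod m), B.card = n →
      ∃ α : ZMod n → ZMod m, CyclicallyStrictlyDecreasing n m α ∧
        ∀ x : ZMod m, x ∈ B ↔ x ∈ Set.range α) ∧
    (∀ α β : ZMod n → ZMod m,
      CyclicallyStrictlyDecreasing n m α → CyclicallyStrictlyDecreasing n m β →
        (Set.range α = Set.range β ↔ ∃ j : ZMod n, ∀ t, β t = α (t + j))) ∧
    Nat.card {α : ZMod n → ZMod m // CyclicallyStrictlyDecreasing n m α} =
      n * m.choose n := by
  haveI : NeZero n := ⟨by omega⟩
  haveI : NeZero m := ⟨by omega⟩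
  classical
  refine ⟨?_, ?_, ?_⟩
  · -- part 1: surjectivity onto n-subsets
    intro B hB
    have hne : B.Nonempty := Finset.card_pos.mp (by omega)
    obtain ⟨x, hx⟩ := hne
    obtain ⟨α, hcsd, _, hiff⟩ := CSDAux.csd_exists hn hm B hB x hx
    exact ⟨α, hcsd, hiff⟩
  · -- part 2: fibers are orbits
    intro α β hα hβ
    constructor
    · intro hr
      have hmem : α 0 ∈ Set.range β := by rw [← hr]; exact Set.mem_range_self _
      obtain ⟨t₀, ht₀⟩ := hmem
      obtain ⟨b, hbc, hbd, hbp⟩ := hβ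
      have hβ' : CyclicallyStrictlyDecreasing n m (fun t => β (t + t₀)) := by
        refine ⟨fun i => b (i + (t₀.val : ℤ)), ?_, ?_, ?_⟩
        · intro i
          rw [hbc (i + (t₀.val : ℤ))]
          show β _ = β _
          push_cast
          rw [ZMod.natCast_rightInverse t₀]
        · intro i
          show b (i + 1 + (t₀.val : ℤ)) < b (i + (t₀.val : ℤ))
          have h : i + 1 + (t₀.val : ℤ) = (i + (t₀.val : ℤ)) + 1 := by ring
          rw [h]; exact hbd _
        · intro i
          show b (i + (n:ℤ) + (t₀.val : ℤ)) = b (i + (t₀.val : ℤ)) - m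
          have h : i + (n:ℤ) + (t₀.val : ℤ) = (i + (t₀.val : ℤ)) + n := by ring
          rw [h]; exact hbp _
      have hrange' : Set.range α = Set.range (fun t => β (t + t₀)) := by
        rw [hr]
        ext z
        constructor
        · rintro ⟨t, rfl⟩; exact ⟨t - t₀, by simp⟩
        · rintro ⟨t, rfl⟩; exact ⟨t + t₀, rfl⟩
      have h0 : α 0 = (fun t => β (t + t₀)) 0 := by simpa using ht₀.symm
      have heq := CSDAux.csd_unique hn hm hα hβ' hrange' h0
      refine ⟨-t₀, fun t => ?_⟩
      rw [heq]
      simp only []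
      rw [neg_add_cancel_right]
    · rintro ⟨j, hj⟩
      ext z
      simp only [Set.mem_range]
      constructor
      · rintro ⟨t, rfl⟩
        exact ⟨t - j, by rw [hj, sub_add_cancel]⟩
      · rintro ⟨t, rfl⟩
        rw [hj]
        exact ⟨t + j, rfl⟩
  · -- part 3: counting
    have hΦpf : ∀ p : {α : ZMod n → ZMod m // CyclicallyStrictlyDecreasing n m α},
        (Finset.image p.1 Finset.univ).card = n ∧ p.1 0 ∈ Finset.image p.1 Finset.univ := by
      rintro ⟨α, hα⟩
      refine ⟨?_, Finset.mem_image_of_mem _ (Finset.mem_univ _)⟩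
      rw [Finset.card_image_of_injective _ (CSDAux.csd_inj hn hm hα), Finset.card_univ,
        ZMod.card]
    set Φ : {α : ZMod n → ZMod m // CyclicallyStrictlyDecreasing n m α} →
        {p : Finset (ZMod m) × ZMod m // p.1.card = n ∧ p.2 ∈ p.1} :=
      fun p => ⟨(Finset.image p.1 Finset.univ, p.1 0), hΦpf p⟩ with hΦdef
    have hinj : Function.Injective Φ := by
      rintro ⟨α, hα⟩ ⟨β, hβ⟩ h
      simp only [hΦdef, Subtype.mk.injEq, Prod.mk.injEq] at h
      obtain ⟨h1, h2⟩ := h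
      have hr : Set.range α = Set.range β := by
        have := congrArg (fun s : Finset (ZMod m) => (s : Set (ZMod m))) h1
        simpa [Finset.coe_image] using this
      exact Subtype.ext (CSDAux.csd_unique hn hm hα hβ hr h2)
    have hsurj : Function.Surjective Φ := by
      rintro ⟨⟨B, x⟩, hcard, hmem⟩
      obtain ⟨α, hcsd, h0, hiff⟩ := CSDAux.csd_exists hn hm B hcard x hmem
      refine ⟨⟨α, hcsd⟩, ?_⟩
      apply Subtype.ext
      simp only [hΦdef, Prod.mk.injEq]
      refine ⟨?_, h0⟩
      ext z
      have hz := hiff z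
      simp only [Set.mem_range] at hz
      simp only [Finset.mem_image, Finset.mem_univ, true_and]
      exact hz.symm
    rw [Nat.card_eq_of_bijective Φ ⟨hinj, hsurj⟩]
    have e : (Σ s : {s : Finset (ZMod m) // s.card = n}, {y : ZMod m // y ∈ s.1}) ≃
        {p : Finset (ZMod m) × ZMod m // p.1.card = n ∧ p.2 ∈ p.1} :=
      { toFun := fun q => ⟨(q.1.1, q.2.1), q.1.2, q.2.2⟩
        invFun := fun p => ⟨⟨p.1.1, p.2.1⟩, ⟨p.1.2, p.2.2⟩⟩
        left_inv := fun q => rfl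
        right_inv := fun p => rfl }
    rw [← Nat.card_congr e, Nat.card_eq_fintype_card, Fintype.card_sigma]
    have hfix : ∀ s : {s : Finset (ZMod m) // s.card = n},
        Fintype.card {y : ZMod m // y ∈ s.1} = n := by
      intro s; rw [Fintype.card_coe]; exact s.2
    rw [Finset.sum_congr rfl (fun s _ => hfix s), Finset.sum_const, smul_eq_mul,
      Finset.card_univ, Fintype.card_finset_len, ZMod.card, mul_comm]
end

section
/- Let m = n + κ with n ≥ 1, κ ≥ 1. For every n-element subset B of ℤ/m: ∑_{A ∈ Q_0} γ(A)|Δ*_{A,B}|² = (m−n)/m, where Q_0 is the set of n-element subsets of ℤ/m containing 0, γ(A) = m − 1 − max(A) (max taken in the representatives {0,...,m−1}), and Δ*_{A,B} = m^{−n/2} det(ζ^{ab})_{a∈A,b∈B} with ζ = exp(2πi/m). -/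
open scoped BigOperators

/-- `ζ_m = exp(2πi/m)`. -/
noncomputable def zetaC (m : ℕ) : ℂ := Complex.exp (2 * Real.pi * Complex.I / m)

/-- The `n × n` minor of the matrix `(ζ^{ab})_{0 ≤ a,b ≤ m-1}` with rows the
`n`-element subset `A` and columns the `n`-element subset `B` (both taken in
increasing order). -/
noncomputable def DeltaMinor (m n : ℕ) (A B : Finset (Fin m))
    (hA : A.card = n) (hB : B.card = n) : ℂ :=
  Matrix.det (Matrix.of fun i j : Fin n =>
    zetaC m ^ (((A.orderIsoOfFin hA i : Fin m) : ℕ) * ((B.orderIsoOfFin hB j : Fin m) : ℕ)))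

/-- The normalized minor `Δ*_{A,B} = m^{-n/2} Δ_{A,B}` of the unitary matrix
`M* = m^{-1/2} (ζ^{ab})`. -/
noncomputable def DeltaMinorStar (m n : ℕ) (A B : Finset (Fin m))
    (hA : A.card = n) (hB : B.card = n) : ℂ :=
  (((Real.sqrt m : ℂ))⁻¹) ^ n * DeltaMinor m n A B hA hB

section ZagierAux
open Finset Matrix


lemma cauchyBinet {n m : ℕ} (N : Matrix (Fin n) (Fin m) ℂ) (P : Matrix (Fin m) (Fin n) ℂ) :
    (N * P).det = ∑ A : Finset (Fin m), if h : A.card = n then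
      (N.submatrix id (fun i => A.orderEmbOfFin h i)).det *
      (P.submatrix (fun i => A.orderEmbOfFin h i) id).det else 0 := by
  classical
  have h1 : (N * P).det
      = ∑ f : Fin n → Fin m, (∏ i, N i (f i)) * (P.submatrix f id).det := by
    have h0 : (N * P) = Matrix.of (fun i => ∑ k : Fin m, N i k • P k) := by
      ext i j; simp [Matrix.mul_apply]
    calc (N * P).det = Matrix.detRowAlternating (fun i => ∑ k : Fin m, N i k • P k) := by
          rw [h0]; rfl
      _ = ∑ f : Fin n → Fin m, Matrix.detRowAlternating (fun i => N i (f i) • P (f i)) :=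
          (Matrix.detRowAlternating (R := ℂ) (n := Fin n)).toMultilinearMap.map_sum
            (fun i k => N i k • P k)
      _ = ∑ f : Fin n → Fin m, (∏ i, N i (f i)) * (P.submatrix f id).det := by
          refine Finset.sum_congr rfl fun f _ => ?_
          have := (Matrix.detRowAlternating (R := ℂ) (n := Fin n)).toMultilinearMap.map_smul_univ
            (fun i => N i (f i)) (fun i => P (f i))
          calc Matrix.detRowAlternating (fun i => N i (f i) • P (f i))
              = (∏ i, N i (f i)) • Matrix.detRowAlternating (fun i => P (f i)) := this
            _ = (∏ i, N i (f i)) * (P.submatrix f id).det := by rw [smul_eq_mul]; rfl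
  rw [h1]
  -- restrict to injective f
  have h2 : ∑ f : Fin n → Fin m, (∏ i, N i (f i)) * (P.submatrix f id).det
      = ∑ f ∈ Finset.univ.filter (fun f : Fin n → Fin m => Function.Injective f),
          (∏ i, N i (f i)) * (P.submatrix f id).det := by
    refine (Finset.sum_subset (Finset.filter_subset _ _) fun f _ hf => ?_).symm
    have hinj : ¬ Function.Injective f := by simpa using hf
    have : (P.submatrix f id).det = 0 := by
      apply Matrix.detRowAlternating.map_eq_zero_of_not_injective
      intro h
      exact hinj (fun i j hij => h (by funext k; simp [hij]))
    simp [this]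
  rw [h2]
  -- fiberwise by image
  rw [← Finset.sum_fiberwise
    (Finset.univ.filter (fun f : Fin n → Fin m => Function.Injective f))
    (fun f : Fin n → Fin m => Finset.image f Finset.univ)
    (fun f => (∏ i, N i (f i)) * (P.submatrix f id).det)]
  refine Finset.sum_congr rfl fun A _ => ?_
  by_cases h : A.card = n
  · rw [dif_pos h]
    set emb : Fin n → Fin m := fun i => A.orderEmbOfFin h i with hemb
    have hembinj : Function.Injective emb := fun i j hij => (A.orderEmbOfFin h).injective hij
    have himemb : Finset.image emb Finset.univ = A := by
      ext x
      simp only [Finset.mem_image, Finset.mem_univ, true_and]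
      constructor
      · rintro ⟨i, rfl⟩
        exact Finset.orderEmbOfFin_mem A h i
      · intro hx
        have : x ∈ Set.range (A.orderEmbOfFin h) := by
          rw [Finset.range_orderEmbOfFin]; exact hx
        obtain ⟨i, hi⟩ := this
        exact ⟨i, hi⟩
    have hbij : ∑ f ∈ (Finset.univ.filter (fun f : Fin n → Fin m => Function.Injective f)).filter
          (fun f => Finset.image f Finset.univ = A),
          (∏ i, N i (f i)) * (P.submatrix f id).det
        = ∑ τ : Equiv.Perm (Fin n),
          (∏ i, N i (emb (τ i))) * (P.submatrix (emb ∘ ⇑τ) id).det := by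
      refine (Finset.sum_bij (fun (τ : Equiv.Perm (Fin n)) _ => emb ∘ ⇑τ) ?_ ?_ ?_ ?_).symm
      · intro τ _
        simp only [Finset.mem_filter, Finset.mem_univ, true_and]
        constructor
        · exact hembinj.comp τ.injective
        · rw [← himemb]
          ext x
          simp only [Finset.mem_image, Finset.mem_univ, true_and, Function.comp_apply]
          exact ⟨fun ⟨i, hi⟩ => ⟨τ i, hi⟩, fun ⟨i, hi⟩ => ⟨τ.symm i, by simpa using hi⟩⟩
      · intro τ₁ _ τ₂ _ hτ
        exact Equiv.ext fun i => hembinj (congrFun hτ i)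
      · intro f hf
        simp only [Finset.mem_filter, Finset.mem_univ, true_and] at hf
        obtain ⟨hfinj, hfim⟩ := hf
        have hmem : ∀ i, f i ∈ A := fun i => by
          rw [← hfim]; exact Finset.mem_image_of_mem f (Finset.mem_univ i)
        set u : Fin n → Fin n := fun i => (A.orderIsoOfFin h).symm ⟨f i, hmem i⟩ with hu
        have huinj : Function.Injective u := by
          intro i j hij
          have := congrArg (A.orderIsoOfFin h) hij
          simp only [OrderIso.apply_symm_apply, Subtype.mk.injEq, hu] at this
          exact hfinj this
        refine ⟨Equiv.ofBijective u (Finite.injective_iff_bijective.mp huinj), Finset.mem_univ _, ?_⟩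
        funext i
        show emb (u i) = f i
        rw [hemb]
        simp only [hu, ← Finset.coe_orderIsoOfFin_apply, OrderIso.apply_symm_apply]
      · intro τ _; rfl
    rw [hbij]
    have hperm : ∀ τ : Equiv.Perm (Fin n),
        (P.submatrix (emb ∘ ⇑τ) id).det
          = (Equiv.Perm.sign τ : ℂ) * (P.submatrix emb id).det := by
      intro τ
      have : P.submatrix (emb ∘ ⇑τ) id = (P.submatrix emb id).submatrix (⇑τ) id := by
        rw [Matrix.submatrix_submatrix]; rfl
      rw [this, Matrix.det_permute]
    calc ∑ τ : Equiv.Perm (Fin n), (∏ i, N i (emb (τ i))) * (P.submatrix (emb ∘ ⇑τ) id).det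
        = (∑ τ : Equiv.Perm (Fin n), (Equiv.Perm.sign τ : ℂ) * ∏ i, N i (emb (τ i)))
            * (P.submatrix emb id).det := by
          rw [Finset.sum_mul]
          refine Finset.sum_congr rfl fun τ _ => ?_
          rw [hperm τ]; ring
      _ = (N.submatrix id emb).det * (P.submatrix emb id).det := by
          congr 1
          rw [← Matrix.det_transpose (N.submatrix id emb), Matrix.det_apply']
          rfl
  · rw [dif_neg h]
    refine Finset.sum_eq_zero fun f hf => ?_
    exfalso
    simp only [Finset.mem_filter, Finset.mem_univ, true_and] at hf
    exact h (by rw [← hf.2, Finset.card_image_of_injective _ hf.1, Finset.card_fin])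

lemma zeta_spec {m : ℕ} (hm : m ≠ 0) : IsPrimitiveRoot (zetaC m) m :=
  Complex.isPrimitiveRoot_exp m hm

lemma zeta_abs (m : ℕ) : ‖zetaC m‖ = 1 := by
  rw [zetaC]
  have h : (2 * (Real.pi:ℂ) * Complex.I / m) = ((2 * Real.pi / m : ℝ) : ℂ) * Complex.I := by
    push_cast; ring
  rw [h, Complex.norm_exp_ofReal_mul_I]


lemma unitarity {n m : ℕ} (hm : m ≠ 0) (B : Finset (Fin m)) (hB : B.card = n) :
    ∑ A : Finset (Fin m), (if h : A.card = n then
      ‖DeltaMinorStar m n A B h hB‖ ^ 2 else 0) = 1 := by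
  classical
  set c : ℂ := ((Real.sqrt m : ℂ))⁻¹ with hc
  set ζ : ℂ := zetaC m with hzeta
  have hζ : IsPrimitiveRoot ζ m := zeta_spec hm
  have habs : ∀ e : ℕ, ‖ζ ^ e‖ = 1 := by
    intro e; rw [norm_pow, zeta_abs, one_pow]
  have hζ0 : ∀ e : ℕ, ζ ^ e ≠ 0 := by
    intro e he
    have := habs e
    rw [he] at this
    simpa using this
  set b : Fin n → Fin m := fun i => B.orderEmbOfFin hB i with hb
  set N : Matrix (Fin n) (Fin m) ℂ := Matrix.of (fun i k => c * ζ ^ ((b i).val * k.val)) with hN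
  have hcconj : (starRingEnd ℂ) c = c := by
    rw [hc, map_inv₀, Complex.conj_ofReal]
  have hNNH : N * Nᴴ = 1 := by
    ext i j
    rw [Matrix.mul_apply]
    set w : ℂ := ζ ^ (b i).val * (ζ ^ (b j).val)⁻¹ with hw
    have hstar : ∀ e : ℕ, star (c * ζ ^ e) = c * (ζ ^ e)⁻¹ := by
      intro e
      rw [star_mul', show (star c : ℂ) = c from hcconj,
        show (star (ζ ^ e) : ℂ) = (ζ ^ e)⁻¹ from (Complex.inv_eq_conj (habs e)).symm]
    have hterm : ∀ k : Fin m, N i k * Nᴴ k j = c ^ 2 * w ^ k.val := by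
      intro k
      rw [Matrix.conjTranspose_apply]
      show c * ζ ^ ((b i).val * k.val) * star (c * ζ ^ ((b j).val * k.val)) = _
      rw [hstar ((b j).val * k.val), pow_mul, pow_mul, hw, mul_pow, inv_pow]
      ring
    rw [Finset.sum_congr rfl fun k _ => hterm k, ← Finset.mul_sum]
    rw [Fin.sum_univ_eq_sum_range (fun e => w ^ e) m]
    by_cases hij : i = j
    · subst hij
      have hw1 : w = 1 := by
        rw [hw, mul_inv_cancel₀ (hζ0 _)]
      rw [hw1]
      simp only [one_pow, Finset.sum_const, Finset.card_range, nsmul_eq_mul, mul_one]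
      rw [Matrix.one_apply_eq]
      rw [hc]
      have hmpos : (0:ℝ) ≤ m := Nat.cast_nonneg m
      have : ((Real.sqrt m : ℂ))⁻¹ ^ 2 = (m : ℂ)⁻¹ := by
        rw [← Complex.ofReal_inv, ← Complex.ofReal_pow, inv_pow, Real.sq_sqrt hmpos,
          Complex.ofReal_inv, Complex.ofReal_natCast]
      rw [this, inv_mul_cancel₀ (by exact_mod_cast hm)]
    · have hbne : (b i).val ≠ (b j).val := by
        intro hval
        exact hij ((B.orderEmbOfFin hB).injective (Fin.val_injective hval))
      have hwne : w ≠ 1 := by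
        intro hw1
        rw [hw, mul_inv_eq_one₀ (hζ0 _)] at hw1
        exact hbne (hζ.pow_inj (b i).isLt (b j).isLt hw1)
      have hwm : w ^ m = 1 := by
        rw [hw, mul_pow, inv_pow, ← pow_mul, ← pow_mul, mul_comm ((b i).val) m,
          mul_comm ((b j).val) m, pow_mul, pow_mul, hζ.pow_eq_one, one_pow, one_pow]
        simp
      rw [geom_sum_eq hwne, hwm]
      simp [Matrix.one_apply_ne hij]
  -- Cauchy-Binet
  have hCB := cauchyBinet N Nᴴ
  rw [hNNH, Matrix.det_one] at hCB
  have hterm : ∀ (A : Finset (Fin m)) (h : A.card = n),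
      (N.submatrix id (fun i => A.orderEmbOfFin h i)).det *
        (Nᴴ.submatrix (fun i => A.orderEmbOfFin h i) id).det
      = ((‖DeltaMinorStar m n A B h hB‖ ^ 2 : ℝ) : ℂ) := by
    intro A h
    have hd : (N.submatrix id (fun i => A.orderEmbOfFin h i)).det
        = DeltaMinorStar m n A B h hB := by
      have h1 : N.submatrix id (fun i => A.orderEmbOfFin h i)
          = c • ((Matrix.of fun i j : Fin n =>
              ζ ^ (((A.orderIsoOfFin h i : Fin m) : ℕ) * ((B.orderIsoOfFin hB j : Fin m) : ℕ)))ᵀ) := by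
        ext i j
        simp only [Matrix.submatrix_apply, hN, Matrix.of_apply, id_eq, Matrix.smul_apply,
          Matrix.transpose_apply, smul_eq_mul, Finset.coe_orderIsoOfFin_apply]
        rw [mul_comm (((A.orderEmbOfFin h) j).val)]
      rw [h1, Matrix.det_smul, Matrix.det_transpose, DeltaMinorStar, DeltaMinor,
        Fintype.card_fin]
    have hdH : (Nᴴ.submatrix (fun i => A.orderEmbOfFin h i) id).det
        = (starRingEnd ℂ) ((N.submatrix id (fun i => A.orderEmbOfFin h i)).det) := by
      have : Nᴴ.submatrix (fun i => A.orderEmbOfFin h i) id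
          = (N.submatrix id (fun i => A.orderEmbOfFin h i))ᴴ := by
        ext i j; simp [Matrix.conjTranspose_apply]
      rw [this, Matrix.det_conjTranspose]; rfl
    rw [hd, hdH, hd, Complex.mul_conj, Complex.sq_norm, Complex.ofReal_inj.mpr rfl]
  have hsum : ∑ A : Finset (Fin m), (if h : A.card = n then
      ((‖DeltaMinorStar m n A B h hB‖ ^ 2 : ℝ) : ℂ) else 0) = 1 := by
    refine Eq.trans (Finset.sum_congr rfl fun A _ => ?_) hCB.symm
    by_cases h : A.card = n
    · rw [dif_pos h, dif_pos h, hterm A h]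
    · rw [dif_neg h, dif_neg h]
  have h2 : ((∑ A : Finset (Fin m), (if h : A.card = n then
      ‖DeltaMinorStar m n A B h hB‖ ^ 2 else 0) : ℝ) : ℂ) = ((1:ℝ):ℂ) := by
    rw [Complex.ofReal_sum, Complex.ofReal_one, ← hsum]
    refine Finset.sum_congr rfl fun A _ => ?_
    by_cases h : A.card = n
    · rw [dif_pos h, dif_pos h]
    · rw [dif_neg h, dif_neg h, Complex.ofReal_zero]
  exact_mod_cast h2

lemma abs_deltaStar_translate {n m : ℕ} [NeZero m] (B : Finset (Fin m)) (hB : B.card = n)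
    (A : Finset (Fin m)) (hA : A.card = n) (t : Fin m)
    (hA2 : (A.map (Equiv.addRight t).toEmbedding).card = n) :
    ‖DeltaMinorStar m n (A.map (Equiv.addRight t).toEmbedding) B hA2 hB‖
      = ‖DeltaMinorStar m n A B hA hB‖ := by
  classical
  have hm : m ≠ 0 := NeZero.ne m
  set ζ : ℂ := zetaC m with hzeta
  have hζm : ζ ^ m = 1 := (zeta_spec hm).pow_eq_one
  have hpow : ∀ u v : ℕ, u % m = v % m → ζ ^ u = ζ ^ v := by
    intro u v h
    rw [pow_eq_pow_mod u hζm, pow_eq_pow_mod v hζm, h]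
  set A' : Finset (Fin m) := A.map (Equiv.addRight t).toEmbedding with hA'def
  have hA2' : A'.card = n := hA2
  have hmem : ∀ x : Fin m, x ∈ A ↔ (Equiv.addRight t) x ∈ A' := by
    intro x
    rw [hA'def, Finset.mem_map_equiv, Equiv.symm_apply_apply]
  set e : Fin n ≃ Fin n :=
    (A.orderIsoOfFin hA).toEquiv.trans
      ((Equiv.subtypeEquiv (Equiv.addRight t) hmem).trans
        (A'.orderIsoOfFin hA2').toEquiv.symm) with he
  have hkey : ∀ i : Fin n, ((A'.orderIsoOfFin hA2') (e i) : Fin m)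
      = ((A.orderIsoOfFin hA) i : Fin m) + t := by
    intro i
    simp only [he, Equiv.trans_apply]
    erw [OrderIso.apply_symm_apply]
    simp [Equiv.subtypeEquiv]
  -- matrices
  set D : Matrix (Fin n) (Fin n) ℂ := Matrix.of fun i j : Fin n =>
    ζ ^ (((A.orderIsoOfFin hA i : Fin m) : ℕ) * ((B.orderIsoOfFin hB j : Fin m) : ℕ)) with hD
  set D' : Matrix (Fin n) (Fin n) ℂ := Matrix.of fun i j : Fin n =>
    ζ ^ (((A'.orderIsoOfFin hA2' i : Fin m) : ℕ) * ((B.orderIsoOfFin hB j : Fin m) : ℕ)) with hD'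
  have hE : D'.submatrix (⇑e) id = Matrix.of (fun i j : Fin n =>
      (ζ ^ ((B.orderIsoOfFin hB j : Fin m) : ℕ)) ^ t.val * D i j) := by
    ext i j
    simp only [Matrix.submatrix_apply, hD', hD, Matrix.of_apply, id_eq]
    rw [hkey i]
    set a : ℕ := ((A.orderIsoOfFin hA) i : Fin m).val
    set bj : ℕ := ((B.orderIsoOfFin hB) j : Fin m).val
    have hadd : (((A.orderIsoOfFin hA) i : Fin m) + t).val = (a + t.val) % m := by
      rw [Fin.add_def]
    rw [hadd]
    have : ζ ^ ((a + t.val) % m * bj) = ζ ^ ((a + t.val) * bj) := by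
      apply hpow
      exact (Nat.mod_modEq (a + t.val) m).mul_right bj
    rw [this, add_mul, pow_add, ← pow_mul, mul_comm t.val bj, pow_mul]
    ring
  have hdetE : (D'.submatrix (⇑e) id).det = (Equiv.Perm.sign e : ℂ) * D'.det :=
    Matrix.det_permute e D'
  have hdetE2 : (D'.submatrix (⇑e) id).det
      = (∏ j, (ζ ^ ((B.orderIsoOfFin hB j : Fin m) : ℕ)) ^ t.val) * D.det := by
    rw [hE]
    exact Matrix.det_mul_row _ _
  have habsfac : ‖∏ j, (ζ ^ ((B.orderIsoOfFin hB j : Fin m) : ℕ)) ^ t.val‖ = 1 := by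
    rw [norm_prod]
    refine Finset.prod_eq_one fun j _ => ?_
    rw [norm_pow, norm_pow, zeta_abs, one_pow, one_pow]
  have habs : ‖D'.det‖ = ‖D.det‖ := by
    have h1 : ‖(Equiv.Perm.sign e : ℂ) * D'.det‖ = ‖D'.det‖ := by
      rcases Int.units_eq_one_or (Equiv.Perm.sign e) with h | h <;> rw [h] <;> simp
    rw [← h1, ← hdetE, hdetE2, norm_mul, habsfac, one_mul]
  have habs' : ‖DeltaMinor m n A' B hA2' hB‖
      = ‖DeltaMinor m n A B hA hB‖ := habs
  rw [DeltaMinorStar, DeltaMinorStar, norm_mul, norm_mul, habs']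

end ZagierAux

noncomputable def gammaFun {m : ℕ} (A : Finset (Fin m)) : ℕ :=
  if h : A.Nonempty then m - 1 - (A.max' h).val else 0

section Gap
variable {m : ℕ} [NeZero m]
open Fin.CommRing

lemma fin_sub_val (x y : Fin m) :
    (x - y).val = if y.val ≤ x.val then x.val - y.val else x.val + m - y.val := by
  have hx := x.isLt; have hy := y.isLt
  rw [Fin.sub_def]
  show (m - y.val + x.val) % m = _
  rcases le_or_gt y.val x.val with h | h
  · rw [if_pos h]
    have h2 : m - y.val + x.val = (x.val - y.val) + m := by omega
    rw [h2, Nat.add_mod_right, Nat.mod_eq_of_lt (by omega)]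
  · rw [if_neg (by omega)]
    have h2 : m - y.val + x.val = x.val + m - y.val := by omega
    rw [h2, Nat.mod_eq_of_lt (by omega)]

lemma fin_sub_eq_zero_iff (x y : Fin m) : x - y = 0 ↔ x = y := sub_eq_zero

/-- the key uniqueness: if `a ≠ a'` both "see all of A before c", contradiction -/
lemma gap_unique {A : Finset (Fin m)} {a a' : Fin m} {c : Fin m}
    (ha : a ∈ A) (ha' : a' ∈ A)
    (hc : ∀ b ∈ A, b - a < c - a) (hc' : ∀ b ∈ A, b - a' < c - a') :
    a = a' := by
  by_contra hne
  have hca : c ≠ a := by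
    intro h
    have := hc a ha
    rw [h] at this
    simp at this
  have hca' : c ≠ a' := by
    intro h
    have := hc' a' ha'
    rw [h] at this
    simp at this
  have h1 := hc a' ha'
  have h2 := hc' a ha
  -- express via u x = (x - c).val
  have hsub : ∀ x y : Fin m, x - y = (x - c) - (y - c) := by
    intro x y; ring
  have hzero : ∀ y : Fin m, c - y = (0 : Fin m) - (y - c) := by
    intro y; ring
  have hune : ∀ x : Fin m, x ≠ c → (x - c).val ≠ 0 := by
    intro x hx h0
    exact hx (by
      have : x - c = 0 := Fin.ext (by simpa using h0)
      rwa [fin_sub_eq_zero_iff] at this)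
  have hua := hune a (Ne.symm hca)
  have hua' := hune a' (Ne.symm hca')
  set ua := (a - c).val with hua_def
  set ua' := (a' - c).val with hua'_def
  have hlt : ∀ x : Fin m, (x : Fin m).val < m := Fin.isLt
  rw [hsub a' a, hzero a, Fin.lt_def] at h1
  rw [hsub a a', hzero a', Fin.lt_def] at h2
  rw [fin_sub_val (a' - c) (a - c), fin_sub_val 0 (a - c)] at h1
  rw [fin_sub_val (a - c) (a' - c), fin_sub_val 0 (a' - c)] at h2
  have huane : ua ≠ ua' := by
    intro h
    exact hne (by
      have : a - c = a' - c := Fin.ext h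
      exact sub_left_injective this)
  rw [Fin.val_zero] at h1 h2
  have h3 := (a - c).isLt
  have h4 := (a' - c).isLt
  rcases lt_or_gt_of_ne huane with h | h <;>
    (split_ifs at h1 h2 <;> omega)

lemma gap_exists {A : Finset (Fin m)} (hne : A.Nonempty) {c : Fin m} (hc : c ∉ A) :
    ∃ a ∈ A, ∀ b ∈ A, b - a < c - a := by
  obtain ⟨a, ha, hmin⟩ := A.exists_min_image (fun x => (x - c).val) hne
  refine ⟨a, ha, fun b hb => ?_⟩
  have hune : ∀ x : Fin m, x ∈ A → (x - c).val ≠ 0 := by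
    intro x hx h0
    have : x - c = 0 := Fin.ext (by simpa using h0)
    rw [sub_eq_zero] at this
    exact hc (this ▸ hx)
  have hua := hune a ha
  have hub := hune b hb
  have hmin' := hmin b hb
  have hsub : b - a = (b - c) - (a - c) := by ring
  have hzero : c - a = (0 : Fin m) - (a - c) := by ring
  rw [hsub, hzero, Fin.lt_def, fin_sub_val (b - c) (a - c), fin_sub_val 0 (a - c)]
  rw [Fin.val_zero]
  have h3 := (a - c).isLt
  have h4 := (b - c).isLt
  split_ifs <;> omega

lemma gap_sum {n : ℕ} (hn : 1 ≤ n) (A : Finset (Fin m)) (hA : A.card = n) :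
    ∑ a ∈ A, gammaFun (A.map (Equiv.addRight (-a)).toEmbedding) = m - n := by
  classical
  have hAne : A.Nonempty := Finset.card_pos.mp (by omega)
  -- step 1: pointwise identification with a count
  have step1 : ∀ a ∈ A, gammaFun (A.map (Equiv.addRight (-a)).toEmbedding)
      = (Finset.univ.filter (fun y : Fin m => ∀ b ∈ A, b - a < y)).card := by
    intro a ha
    set Aa := A.map (Equiv.addRight (-a)).toEmbedding with hAa
    have hAane : Aa.Nonempty := by
      obtain ⟨x, hx⟩ := hAne
      exact ⟨x + (-a), Finset.mem_map_of_mem _ hx⟩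
    rw [gammaFun, dif_pos hAane]
    have hmemAa : ∀ x : Fin m, x ∈ Aa ↔ ∃ b ∈ A, b - a = x := by
      intro x
      rw [hAa, Finset.mem_map]
      constructor
      · rintro ⟨b, hb, rfl⟩
        exact ⟨b, hb, by simp [Equiv.addRight, sub_eq_add_neg]⟩
      · rintro ⟨b, hb, rfl⟩
        exact ⟨b, hb, by simp [Equiv.addRight, sub_eq_add_neg]⟩
    have hIoi : Finset.univ.filter (fun y : Fin m => ∀ b ∈ A, b - a < y)
        = Finset.Ioi (Aa.max' hAane) := by
      ext y
      simp only [Finset.mem_filter, Finset.mem_univ, true_and, Finset.mem_Ioi]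
      rw [Finset.max'_lt_iff]
      constructor
      · intro h x hx
        obtain ⟨b, hb, rfl⟩ := (hmemAa x).mp hx
        exact h b hb
      · intro h b hb
        exact h _ ((hmemAa (b - a)).mpr ⟨b, hb, rfl⟩)
    rw [hIoi, Fin.card_Ioi]
  rw [Finset.sum_congr rfl step1]
  -- step 2: double counting
  set C : Fin m → Finset (Fin m) :=
    fun a => (Finset.univ.filter (fun y : Fin m => ∀ b ∈ A, b - a < y)).image (fun y => a + y)
    with hC
  have hcardC : ∀ a, (C a).card
      = (Finset.univ.filter (fun y : Fin m => ∀ b ∈ A, b - a < y)).card := by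
    intro a
    rw [hC]
    exact Finset.card_image_of_injective _ (add_right_injective a)
  have hmemC : ∀ a c : Fin m, c ∈ C a ↔ ∀ b ∈ A, b - a < c - a := by
    intro a c
    rw [hC]
    simp only [Finset.mem_image, Finset.mem_filter, Finset.mem_univ, true_and]
    constructor
    · rintro ⟨y, hy, rfl⟩
      simpa [add_sub_cancel_left] using hy
    · intro h
      exact ⟨c - a, by simpa [add_sub_cancel_left] using h, by ring⟩
  have hdisj : ∀ a ∈ A, ∀ a' ∈ A, a ≠ a' → Disjoint (C a) (C a') := by
    intro a ha a' ha' hne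
    rw [Finset.disjoint_left]
    intro c hc hc'
    exact hne (gap_unique ha ha' ((hmemC a c).mp hc) ((hmemC a' c).mp hc'))
  have hbi : A.biUnion C = Finset.univ \ A := by
    ext c
    simp only [Finset.mem_biUnion, Finset.mem_sdiff, Finset.mem_univ, true_and]
    constructor
    · rintro ⟨a, ha, hc⟩
      rw [hmemC] at hc
      intro hcA
      have := hc c hcA
      simp at this
    · intro hc
      obtain ⟨a, ha, h⟩ := gap_exists hAne hc
      exact ⟨a, ha, (hmemC a c).mpr h⟩
  calc ∑ a ∈ A, (Finset.univ.filter (fun y : Fin m => ∀ b ∈ A, b - a < y)).card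
      = ∑ a ∈ A, (C a).card := by
        exact (Finset.sum_congr rfl fun a _ => (hcardC a).symm)
    _ = (A.biUnion C).card := (Finset.card_biUnion hdisj).symm
    _ = (Finset.univ \ A).card := by rw [hbi]
    _ = m - n := by
        rw [Finset.card_sdiff_of_subset (Finset.subset_univ A), hA, Finset.card_univ, Fintype.card_fin]
end Gap


set_option maxHeartbeats 1600000 in
/-- equation (5) in Zagier's proof. Let `m = n + κ`
(`n ≥ 1`, `κ ≥ 1`). For every `n`-element subset `B` of `{0, …, m-1}`:
`∑_{A ∈ Q₀} γ(A) |Δ*_{A,B}|² = (m - n)/m`, where `Q₀` consists of the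
`n`-element subsets containing `0` and `γ(A) = m - 1 - max A`. -/
theorem zagier_sum_gamma_abs_sq_deltaStar (n κ : ℕ) (hn : 1 ≤ n) (hκ : 1 ≤ κ)
    (m : ℕ) (hm : m = n + κ)
    (B : Finset (Fin m)) (hB : B.card = n) :
    ∑ A : {A : Finset (Fin m) // A.card = n ∧ (⟨0, by omega⟩ : Fin m) ∈ A},
      ((m - 1 - ((A.1.max' ⟨_, A.2.2⟩ : Fin m) : ℕ) : ℕ) : ℝ) *
        ‖DeltaMinorStar m n A.1 B A.2.1 hB‖ ^ 2 =
      ((m - n : ℕ) : ℝ) / m := by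
  classical
  haveI : NeZero m := ⟨by omega⟩
  have hm0 : m ≠ 0 := by omega
  set g : Finset (Fin m) → ℝ := fun A =>
    if h : A.card = n then ‖DeltaMinorStar m n A B h hB‖ ^ 2 else 0 with hg
  have F1 : ∑ A : Finset (Fin m), g A = 1 := unitarity hm0 B hB
  have F2 : ∀ (A : Finset (Fin m)) (t : Fin m),
      g (A.map (Equiv.addRight t).toEmbedding) = g A := by
    intro A t
    have hcard : (A.map (Equiv.addRight t).toEmbedding).card = A.card := Finset.card_map _
    by_cases h : A.card = n
    · simp only [hg]
      rw [dif_pos (hcard.trans h), dif_pos h,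
        abs_deltaStar_translate B hB A h t (hcard.trans h)]
    · simp only [hg]
      rw [dif_neg (by rw [hcard]; exact h), dif_neg h]
  set F : Finset (Fin m) → ℝ := fun A => (gammaFun A : ℝ) * g A with hF
  set T : ℝ := ∑ A : Finset (Fin m), ∑ a ∈ A, F (A.map (Equiv.addRight (-a)).toEmbedding)
    with hT
  have hT1 : T = ((m - n : ℕ) : ℝ) := by
    rw [hT]
    have hper : ∀ A : Finset (Fin m), ∑ a ∈ A, F (A.map (Equiv.addRight (-a)).toEmbedding)
        = ((m - n : ℕ) : ℝ) * g A := by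
      intro A
      by_cases h : A.card = n
      · calc ∑ a ∈ A, F (A.map (Equiv.addRight (-a)).toEmbedding)
            = ∑ a ∈ A, (gammaFun (A.map (Equiv.addRight (-a)).toEmbedding) : ℝ) * g A := by
              refine Finset.sum_congr rfl fun a _ => ?_
              simp only [hF]
              rw [F2]
          _ = (∑ a ∈ A, (gammaFun (A.map (Equiv.addRight (-a)).toEmbedding) : ℝ)) * g A := by
              rw [Finset.sum_mul]
          _ = ((m - n : ℕ) : ℝ) * g A := by
              congr 1
              exact_mod_cast congrArg (fun k : ℕ => (k : ℝ)) (gap_sum (by omega) A h)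
      · have hg0 : g A = 0 := by simp only [hg]; rw [dif_neg h]
        rw [hg0, mul_zero]
        refine Finset.sum_eq_zero fun a _ => ?_
        simp only [hF]
        rw [F2, hg0, mul_zero]
    rw [Finset.sum_congr rfl fun A _ => hper A, ← Finset.mul_sum, F1, mul_one]
  have hT2 : T = (m : ℝ) *
      ∑ A' ∈ Finset.univ.filter (fun A : Finset (Fin m) => (0 : Fin m) ∈ A), F A' := by
    rw [hT, ← Finset.sum_sigma (Finset.univ) (fun A : Finset (Fin m) => A)
      (fun p => F (p.1.map (Equiv.addRight (-p.2)).toEmbedding))]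
    calc ∑ p ∈ (Finset.univ.sigma fun A : Finset (Fin m) => A),
          F (p.1.map (Equiv.addRight (-p.2)).toEmbedding)
        = ∑ q ∈ (Finset.univ.filter fun A : Finset (Fin m) => (0 : Fin m) ∈ A) ×ˢ
            (Finset.univ : Finset (Fin m)), F q.1 := by
          refine Finset.sum_nbij'
            (fun p => (p.1.map (Equiv.addRight (-p.2)).toEmbedding, p.2))
            (fun q => ⟨q.1.map (Equiv.addRight q.2).toEmbedding, q.2⟩) ?_ ?_ ?_ ?_ ?_
          · rintro ⟨A, a⟩ hp
            simp only [Finset.mem_sigma, Finset.mem_univ, true_and] at hp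
            simp only [Finset.mem_product, Finset.mem_filter, Finset.mem_univ, true_and,
              and_true]
            exact Finset.mem_map.mpr ⟨a, hp, by simp [Equiv.addRight]⟩
          · rintro ⟨A', t⟩ hq
            simp only [Finset.mem_product, Finset.mem_filter, Finset.mem_univ, true_and,
              and_true] at hq
            simp only [Finset.mem_sigma, Finset.mem_univ, true_and]
            exact Finset.mem_map.mpr ⟨0, hq, by simp [Equiv.addRight]⟩
          · rintro ⟨A, a⟩ _
            have hfst : Finset.map (Equiv.toEmbedding (Equiv.addRight a))
                (Finset.map (Equiv.toEmbedding (Equiv.addRight (-a))) A) = A := by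
              ext x
              simp only [Finset.mem_map_equiv, Equiv.addRight_symm_apply]
              rw [neg_neg, neg_add_cancel_right]
            show (⟨Finset.map (Equiv.toEmbedding (Equiv.addRight a))
              (Finset.map (Equiv.toEmbedding (Equiv.addRight (-a))) A), a⟩ :
              (_ : Finset (Fin m)) × Fin m) = ⟨A, a⟩
            rw [hfst]
          · rintro ⟨A', t⟩ _
            have hfst : Finset.map (Equiv.toEmbedding (Equiv.addRight (-t)))
                (Finset.map (Equiv.toEmbedding (Equiv.addRight t)) A') = A' := by
              ext x
              simp only [Finset.mem_map_equiv, Equiv.addRight_symm_apply]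
              rw [neg_neg, add_neg_cancel_right]
            show (Finset.map (Equiv.toEmbedding (Equiv.addRight (-t)))
              (Finset.map (Equiv.toEmbedding (Equiv.addRight t)) A'), t) = (A', t)
            rw [hfst]
          · rintro ⟨A, a⟩ _
            rfl
      _ = ∑ A' ∈ (Finset.univ.filter fun A : Finset (Fin m) => (0 : Fin m) ∈ A),
            ∑ _t : Fin m, F A' := by rw [Finset.sum_product]
      _ = ∑ A' ∈ (Finset.univ.filter fun A : Finset (Fin m) => (0 : Fin m) ∈ A),
            (m : ℝ) * F A' := by
          refine Finset.sum_congr rfl fun A' _ => ?_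
          rw [Finset.sum_const, Finset.card_univ, Fintype.card_fin, nsmul_eq_mul]
      _ = (m : ℝ) * ∑ A' ∈ (Finset.univ.filter fun A : Finset (Fin m) => (0 : Fin m) ∈ A),
            F A' := by rw [Finset.mul_sum]
  have hmne : (m : ℝ) ≠ 0 := Nat.cast_ne_zero.mpr hm0
  have key : ∑ A' ∈ Finset.univ.filter (fun A : Finset (Fin m) => (0 : Fin m) ∈ A), F A'
      = ((m - n : ℕ) : ℝ) / m := by
    rw [eq_div_iff hmne]
    have h2 : (m : ℝ) *
        ∑ A' ∈ Finset.univ.filter (fun A : Finset (Fin m) => (0 : Fin m) ∈ A), F A'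
        = ((m - n : ℕ) : ℝ) := hT2.symm.trans hT1
    linarith [h2]
  -- now convert the subtype sum
  have h0 : (⟨0, by omega⟩ : Fin m) = (0 : Fin m) := by
    apply Fin.ext
    simp
  have hsub : ∑ A : {A : Finset (Fin m) // A.card = n ∧ (⟨0, by omega⟩ : Fin m) ∈ A},
      ((m - 1 - ((A.1.max' ⟨_, A.2.2⟩ : Fin m) : ℕ) : ℕ) : ℝ) *
        ‖DeltaMinorStar m n A.1 B A.2.1 hB‖ ^ 2
      = ∑ A' ∈ Finset.univ.filter
          (fun A : Finset (Fin m) => A.card = n ∧ (0 : Fin m) ∈ A), F A' := by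
    refine Finset.sum_bij'
      (fun (A : {A : Finset (Fin m) // A.card = n ∧ (⟨0, by omega⟩ : Fin m) ∈ A})
        (_ : A ∈ Finset.univ) => A.1)
      (fun A' hA' => ⟨A', by
        simp only [Finset.mem_filter, Finset.mem_univ, true_and] at hA'
        exact ⟨hA'.1, h0 ▸ hA'.2⟩⟩) ?_ ?_ ?_ ?_ ?_
    · intro A _
      simp only [Finset.mem_filter, Finset.mem_univ, true_and]
      exact ⟨A.2.1, h0 ▸ A.2.2⟩
    · intro A' _
      exact Finset.mem_univ _
    · intro A _
      rfl
    · intro A' _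
      rfl
    · intro A _
      simp only [hF, hg, gammaFun]
      split_ifs with h1 h2
      · rfl
      · exact absurd A.2.1 h2
      · exact absurd ⟨_, A.2.2⟩ h1
      · exact absurd ⟨_, A.2.2⟩ h1
  rw [hsub, ← key]
  refine Finset.sum_subset ?_ ?_
  · intro A hA
    simp only [Finset.mem_filter, Finset.mem_univ, true_and] at hA ⊢
    exact hA.2
  · intro A hA hA2
    simp only [Finset.mem_filter, Finset.mem_univ, true_and] at hA hA2
    have hcard : A.card ≠ n := fun h => hA2 ⟨h, hA⟩
    simp only [hF, hg]
    rw [dif_neg hcard, mul_zero]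
end
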